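/- arXiv:1711.03515 — 7 statements merged into one kernel-verified Lean document; each statement's English description precedes it below -/
import Mathlib

section
/- Let S be a ring with no zero divisors (not necessarily commutative), let π : S → S be a ring automorphism, and let R = {a ∈ S : π(a) = a} be its fixed subring. Then for every f ∈ R one has Sf ∩ R = Rf, i.e., the contraction to R of the left ideal of S generated by f equals the left ideal of R generated by f. -/
/-- Let `S` be a ring with no zero divisors, `π : S → S` a ring automorphism
and `R = {a ∈ S : π a = a}` its fixed subring. Then for every `f ∈ R`, the contraction to `R`
of the left ideal `S·f` equals the left ideal `R·f`:  `Sf ∩ R = Rf`. -/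
theorem fixed_subring_contraction_of_principal_left_ideal
    (S : Type*) [Ring S] [NoZeroDivisors S] (π : S ≃+* S) (f : S) (hf : π f = f) :
    {y : S | (∃ g : S, y = g * f) ∧ π y = y} = {y : S | ∃ g : S, π g = g ∧ y = g * f} := by
  ext y
  simp only [Set.mem_setOf_eq]
  constructor
  · rintro ⟨⟨g, rfl⟩, hy⟩
    rw [map_mul, hf] at hy
    have h : (π g - g) * f = 0 := by rw [sub_mul, hy, sub_self]
    rcases mul_eq_zero.mp h with h | h
    · exact ⟨g, sub_eq_zero.mp h, rfl⟩
    · exact ⟨0, map_zero π, by rw [h, mul_zero, mul_zero]⟩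
  · rintro ⟨g, hg, rfl⟩
    exact ⟨⟨g, rfl⟩, by rw [map_mul, hf, hg]⟩
end

section
/- Let M be a field and θ a field automorphism of M of finite order n whose fixed field is K = M^θ, and let {α_0, α_1, …, α_{n−1}} be a K-basis of M. Then for every t ≤ n and every choice of t distinct indices k_1, k_2, …, k_t ∈ {0, 1, …, n−1}, the t×t matrix whose (i,j) entry is θ^{j−1}(α_{k_i}) (1 ≤ i, j ≤ t) has nonzero determinant. -/
/-! Skew polynomials over a field `M` twisted by a ring automorphism `θ` (`x·a = θ(a)·x`),
modeled as finitely supported functions `ℕ →₀ M` (coefficient of `xⁱ` at `i`),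
with left-coefficient multiplication `(Σᵢ aᵢ xⁱ)·(Σⱼ bⱼ xʲ) = Σᵢⱼ aᵢ θⁱ(bⱼ) x^{i+j}`. -/

variable {M : Type*} [Field M]

/-- Multiplication of skew polynomials: `f * g` in `M[x;θ]`. -/
noncomputable def sMul (θ : M ≃+* M) (f g : ℕ →₀ M) : ℕ →₀ M :=
  f.sum fun i a => g.sum fun j b => Finsupp.single (i + j) (a * (θ ^ i) b)

/-- The skew polynomial `x - γ`. -/
noncomputable def Xsub (γ : M) : ℕ →₀ M := Finsupp.single 1 1 - Finsupp.single 0 γ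

/-- The skew polynomial `xⁿ - 1`. -/
noncomputable def XnSubOne (n : ℕ) : ℕ →₀ M := Finsupp.single n 1 - Finsupp.single 0 1

/-- The left ideal `S·f = {q·f : q ∈ S}` of `S = M[x;θ]`. -/
def lIdeal (θ : M ≃+* M) (f : ℕ →₀ M) : Set (ℕ →₀ M) := {h | ∃ q, h = sMul θ q f}

/-- `g` right-divides `f` in `M[x;θ]`, i.e. `f ∈ S·g`. -/
def rdvd (θ : M ≃+* M) (g f : ℕ →₀ M) : Prop := f ∈ lIdeal θ g

/-- The fixed subfield of an automorphism. -/
noncomputable def fixedSubfield (φ : M ≃+* M) : Subfield M where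
  carrier := {a | φ a = a}
  zero_mem' := map_zero φ
  one_mem' := map_one φ
  add_mem' := by intro a b ha hb; simp only [Set.mem_setOf_eq, map_add] at *; rw [ha, hb]
  mul_mem' := by intro a b ha hb; simp only [Set.mem_setOf_eq, map_mul] at *; rw [ha, hb]
  neg_mem' := by intro a ha; simp only [Set.mem_setOf_eq, map_neg] at *; rw [ha]
  inv_mem' := by intro a ha; simp only [Set.mem_setOf_eq, map_inv₀] at *; rw [ha]

/-- A skew polynomial lies in the subring `R` of polynomials whose coefficients are fixed
by the automorphism `φ` (for `φ = θ^μ = π`, this is `R = L[x;σ]` with `L = M^π`). -/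
def inR (φ : M ≃+* M) (f : ℕ →₀ M) : Prop := ∀ j, φ (f j) = f j

/-- The polynomial of degree `< n` with coefficient vector `c`. -/
noncomputable def vecPoly {n : ℕ} (c : Fin n → M) : ℕ →₀ M :=
  ∑ j : Fin n, Finsupp.single (j : ℕ) (c j)

/-- Hamming weight of a vector. -/
noncomputable def hWt {n : ℕ} (c : Fin n → M) : ℕ := Set.ncard {j : Fin n | c j ≠ 0}

/-- `α` generates a normal basis `{α, θ(α), …, θ^{n-1}(α)}` of `M` over `K = M^θ`. -/
def NormalBasis (θ : M ≃+* M) (n : ℕ) (α : M) : Prop :=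
  LinearIndependent (fixedSubfield θ) (fun i : Fin n => (θ ^ (i : ℕ)) α) ∧
    Submodule.span (fixedSubfield θ) (Set.range fun i : Fin n => (θ ^ (i : ℕ)) α) = ⊤

/-- `f` is monic of degree `d`. -/
def IsMonicAt (f : ℕ →₀ M) (d : ℕ) : Prop := f d = 1 ∧ ∀ j, d < j → f j = 0

/-- `f` is monic. -/
def IsMonic (f : ℕ →₀ M) : Prop := ∃ d, IsMonicAt f d

/-- Coefficientwise application of an automorphism to a skew polynomial (`f ↦ f^φ`). -/
noncomputable def pmap (φ : M ≃+* M) (f : ℕ →₀ M) : ℕ →₀ M :=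
  Finsupp.mapRange φ (map_zero φ) f


section CirculantAux

variable {M : Type*} [Field M]

lemma pow_apply_succ (θ : M ≃+* M) (j : ℕ) (x : M) : (θ^(j+1)) x = (θ^j) (θ x) := by
  rw [pow_succ]; rfl

lemma fixed_pow (θ : M ≃+* M) (j : ℕ) {a : M} (h : θ a = a) : (θ^j) a = a := by
  induction j with
  | zero => rfl
  | succ m ih => rw [pow_apply_succ, h, ih]

lemma tele (θ : M ≃+* M) (b : ℕ → M) : ∀ (m : ℕ) (x : M),
    ∑ j ∈ Finset.range (m+1), b j * (θ^j) x
    = (∑ j ∈ Finset.range m, (-∑ i ∈ Finset.range (j+1), b i) * ((θ^(j+1)) x - (θ^j) x))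
      - (-∑ i ∈ Finset.range (m+1), b i) * (θ^m) x := by
  intro m
  induction m with
  | zero => intro x; simp
  | succ m ih =>
    intro x
    rw [Finset.sum_range_succ (fun j => b j * (θ^j) x), ih x,
      Finset.sum_range_succ (fun j => (-∑ i ∈ Finset.range (j+1), b i) * ((θ^(j+1)) x - (θ^j) x)),
      Finset.sum_range_succ (fun i => b i) (m+1)]
    ring

/-- Key lemma: a nonzero skew operator of degree ≤ d kills no (d+1) elements that are
linearly independent over the fixed field. -/
lemma key (θ : M ≃+* M) : ∀ (d : ℕ) (c : ℕ → M), (∃ j, j ≤ d ∧ c j ≠ 0) →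
    ∀ v : Fin (d+1) → M, (∀ i, ∑ j ∈ Finset.range (d+1), c j * (θ^j) (v i) = 0) →
    ¬ LinearIndependent (fixedSubfield θ) v := by
  intro d
  induction d with
  | zero =>
    intro c ⟨j, hj, hc⟩ v hker hv
    interval_cases j
    have h0 := hker 0
    simp only [zero_add, Finset.sum_range_one, pow_zero] at h0
    rw [show ((1 : M ≃+* M)) (v 0) = v 0 from rfl] at h0
    exact hv.ne_zero 0 ((mul_eq_zero.mp h0).resolve_left hc)
  | succ d ih =>
    intro c hc v hker hv
    set β := v 0 with hβdef
    have hβ : β ≠ 0 := hv.ne_zero 0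
    set b : ℕ → M := fun j => c j * (θ^j) β with hbdef
    have hbsum : ∑ i ∈ Finset.range (d+2), b i = 0 := hker 0
    set q : ℕ → M := fun m => -∑ i ∈ Finset.range (m+1), b i with hqdef
    have hq1 : q (d+1) = 0 := by simp [hqdef, hbsum]
    -- θ^j β ≠ 0
    have hθβ : ∀ j : ℕ, (θ^j) β ≠ 0 := fun j h =>
      hβ ((θ^j).injective (by rw [h, map_zero]))
    -- the key factorization, pointwise
    have hfact : ∀ x : M, ∑ j ∈ Finset.range (d+1), q j * ((θ^j) (θ x) - (θ^j) x)
        = ∑ j ∈ Finset.range (d+2), c j * (θ^j) (β * x) := by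
      intro x
      have h1 : ∀ j : ℕ, c j * (θ^j) (β * x) = b j * (θ^j) x := by
        intro j; rw [map_mul, hbdef]; ring
      rw [Finset.sum_congr rfl fun j _ => h1 j, tele θ b (d+1) x]
      have hq1' : (-∑ i ∈ Finset.range (d+1+1), b i) = 0 := by
        rw [show d+1+1 = d+2 from rfl, hbsum, neg_zero]
      rw [hq1', zero_mul, sub_zero]
      refine Finset.sum_congr rfl fun j _ => ?_
      rw [hqdef, pow_apply_succ]
    -- q has a nonzero coefficient at some index ≤ d
    have hqne : ∃ j, j ≤ d ∧ q j ≠ 0 := by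
      by_contra h
      push_neg at h
      have hq' : ∀ j ≤ d + 1, q j = 0 := by
        intro j hj
        rcases Nat.lt_or_ge j (d+1) with h' | h'
        · exact h j (Nat.lt_succ_iff.mp h')
        · have : j = d + 1 := le_antisymm hj h'
          rw [this]; exact hq1
      have hb0 : ∀ j ≤ d + 1, b j = 0 := by
        intro j hj
        cases j with
        | zero =>
          have := hq' 0 (by omega)
          simpa [hqdef] using this
        | succ m =>
          have h1 := hq' m (by omega)
          have h2 := hq' (m+1) hj
          have : q (m+1) = q m - b (m+1) := by
            simp [hqdef, Finset.sum_range_succ]; ring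
          rw [h1, h2] at this
          linear_combination this
      obtain ⟨j, hj, hcj⟩ := hc
      exact hcj (by
        have := hb0 j hj
        rw [hbdef] at this
        exact (mul_eq_zero.mp this).resolve_right (hθβ j))
    -- the derived family in the kernel of q
    set y : Fin (d+2) → M := fun i => β⁻¹ * v i with hydef
    set u : Fin (d+1) → M := fun i => θ (y i.succ) - y i.succ with hudef
    have hukern : ∀ i, ∑ j ∈ Finset.range (d+1), q j * (θ^j) (u i) = 0 := by
      intro i
      have : ∀ j : ℕ, (θ^j) (u i) = (θ^j) (θ (y i.succ)) - (θ^j) (y i.succ) := by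
        intro j; rw [hudef]; exact map_sub _ _ _
      rw [Finset.sum_congr rfl fun j _ => by rw [this j]]
      rw [hfact (y i.succ)]
      have : β * y i.succ = v i.succ := by
        simp only [hydef]
        rw [← mul_assoc, mul_inv_cancel₀ hβ, one_mul]
      rw [this]
      exact hker i.succ
    -- but u is linearly independent, contradiction
    refine ih q hqne u hukern ?_
    rw [Fintype.linearIndependent_iff]
    intro g hg
    -- s is fixed by θ
    set s : M := ∑ i : Fin (d+1), (g i : M) * y i.succ with hsdef
    have hgsmul : ∀ (a : fixedSubfield θ) (x : M), a • x = (a : M) * x := fun _ _ => rfl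
    have hθs : θ s = s := by
      have h0 : ∑ i : Fin (d+1), (g i : M) * (θ (y i.succ) - y i.succ) = 0 := by
        rw [← hg]
        exact Finset.sum_congr rfl fun i _ => (hgsmul (g i) (u i)).symm ▸ rfl
      have h1 : θ s = ∑ i : Fin (d+1), (g i : M) * θ (y i.succ) := by
        rw [hsdef, map_sum]
        refine Finset.sum_congr rfl fun i _ => ?_
        rw [map_mul, (g i).2]
      rw [h1, hsdef]
      have := h0
      simp only [mul_sub] at this
      rw [Finset.sum_sub_distrib, sub_eq_zero] at this
      exact this
    set S : fixedSubfield θ := ⟨s, hθs⟩ with hSdef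
    -- full relation among v
    set G : Fin (d+2) → fixedSubfield θ := Fin.cases (-S) g with hGdef
    have hGrel : ∑ j : Fin (d+2), G j • v j = 0 := by
      rw [Fin.sum_univ_succ]
      simp only [hGdef, Fin.cases_zero, Fin.cases_succ]
      have hterm : ∀ i : Fin (d+1), g i • v i.succ = β * ((g i : M) * y i.succ) := by
        intro i
        rw [hgsmul]
        simp only [hydef]
        field_simp
      rw [Finset.sum_congr rfl fun i _ => hterm i, ← Finset.mul_sum, ← hsdef]
      have h2 : (-S) • v 0 = -(s * β) := by
        rw [hgsmul, hβdef]
        push_cast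
        ring
      rw [h2]
      ring
    have hG0 := Fintype.linearIndependent_iff.mp hv G hGrel
    intro i
    have := hG0 i.succ
    simpa [hGdef] using this

end CirculantAux

/-- **Circulant Lemma.** If `θ` is a field automorphism of `M` of finite order `n`
with fixed field `K = M^θ`, `{α₀, …, α_{n-1}}` is a `K`-basis of `M`, `t ≤ n` and
`k₁, …, k_t ∈ {0, …, n-1}` are distinct indices, then the `t × t` matrix with `(i,j)` entry
`θ^{j-1}(α_{k_i})` has nonzero determinant. -/
theorem circulant_lemma {M : Type*} [Field M] (θ : M ≃+* M) (n : ℕ)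
    (hord : orderOf θ = n) (α : Fin n → M)
    (hli : LinearIndependent (fixedSubfield θ) α)
    (hsp : Submodule.span (fixedSubfield θ) (Set.range α) = ⊤)
    (t : ℕ) (ht : t ≤ n) (k : Fin t → Fin n) (hk : Function.Injective k) :
    (Matrix.of fun i j : Fin t => (θ ^ (j : ℕ)) (α (k i))).det ≠ 0 := by
  intro hdet
  obtain ⟨v, hv0, hAv⟩ := Matrix.exists_mulVec_eq_zero_iff.mpr hdet
  rcases t with _ | d
  · exact hv0 (Subsingleton.elim v 0)
  · obtain ⟨j0, hj0⟩ := Function.ne_iff.mp hv0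
    set c : ℕ → M := fun m => if h : m < d + 1 then v ⟨m, h⟩ else 0 with hcdef
    refine key θ d c ⟨(j0 : ℕ), Nat.lt_succ_iff.mp j0.isLt, ?_⟩ (fun i => α (k i)) ?_
      (hli.comp k hk)
    · simpa [hcdef, j0.isLt, Nat.lt_succ_iff.mp j0.isLt] using hj0
    · intro i
      have h := congrFun hAv i
      simp only [Matrix.mulVec, dotProduct, Matrix.of_apply, Pi.zero_apply] at h
      rw [← Fin.sum_univ_eq_sum_range (fun j => c j * (θ ^ j) (α (k i))) (d + 1)]
      rw [Finset.sum_congr rfl fun (j : Fin (d + 1)) _ => by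
        simp only [hcdef, j.isLt, dif_pos, Fin.eta]
        rw [mul_comm]]
      exact h
end

section
/- Let {α_0, …, α_{n−1}} be a K-basis of M, let t ≥ 1 and r ≥ 0 with t + r ≤ n, let k_1, …, k_{t+r} ∈ {0, 1, …, n−1} be distinct indices, and let s_1, s_2 be positive integers with gcd(s_1, n) = 1 and gcd(s_2, n) < t + 1. Let A be the (t+r)×t matrix whose (i,j) entry is θ^{(j−1)s_1}(α_{k_i}), and for 0 ≤ i ≤ r let B_i = ( A | θ^{s_2}(A) | θ^{2s_2}(A) | ⋯ | θ^{i s_2}(A) ) be the block matrix obtained by concatenating the matrices θ^{ℓ s_2}(A) (θ applied to A entrywise). Then rank(B_i) ≥ t + i for every i = 0, …, r. -/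
/-! Skew polynomials over a field `M` twisted by a ring automorphism `θ` (`x·a = θ(a)·x`),
modeled as finitely supported functions `ℕ →₀ M` (coefficient of `xⁱ` at `i`),
with left-coefficient multiplication `(Σᵢ aᵢ xⁱ)·(Σⱼ bⱼ xʲ) = Σᵢⱼ aᵢ θⁱ(bⱼ) x^{i+j}`. -/

variable {M : Type*} [Field M]

/-! ### Auxiliary lemmas for the rank lemma -/

section RankLemmaAux

open Submodule Module

private lemma mulApply' (f g : M ≃+* M) (x : M) : (f * g) x = f (g x) := rfl

private lemma oneApply' (x : M) : (1 : M ≃+* M) x = x := rfl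

private lemma pow_fixed {φ : M ≃+* M} {a : M} (h : φ a = a) : ∀ e : ℕ, (φ ^ e) a = a
  | 0 => rfl
  | e + 1 => by
    rw [pow_succ, mulApply', h, pow_fixed h e]

private lemma pow_congr (θ : M ≃+* M) {n : ℕ} (hord : orderOf θ = n) {a b : ℕ}
    (hab : a % n = b % n) : θ ^ a = θ ^ b := by
  calc θ ^ a = θ ^ (a % orderOf θ) := (pow_mod_orderOf θ a).symm
    _ = θ ^ (b % orderOf θ) := by rw [hord, hab]
    _ = θ ^ b := pow_mod_orderOf θ b

/-- Dedekind's independence of characters, packaged for powers of an automorphism. -/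
private lemma dedekind (φ : M ≃+* M) (q : ℕ)
    (hinj : ∀ a b : ℕ, a < q → b < q → φ ^ a = φ ^ b → a = b)
    (c : Fin q → M) (hc : ∀ x : M, ∑ ℓ : Fin q, c ℓ * (φ ^ (ℓ : ℕ)) x = 0) :
    ∀ ℓ, c ℓ = 0 := by
  classical
  let F : Fin q → (M →* M) := fun ℓ => ((φ ^ (ℓ : ℕ)) : M ≃+* M).toRingHom.toMonoidHom
  have hFinj : Function.Injective F := by
    intro a b hab
    apply Fin.ext
    refine hinj a b a.isLt b.isLt ?_
    ext x
    exact DFunLike.congr_fun hab x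
  have li := (linearIndependent_monoidHom M M).comp F hFinj
  refine Fintype.linearIndependent_iff.mp li c ?_
  funext x
  have := hc x
  simpa [F, Finset.sum_apply] using this

/-- If `h` is orthogonal to all vectors `(θ^e (α (k row)))_row`, then `h = 0`. -/
private lemma perp_all_zero (θ : M ≃+* M) {n : ℕ} (hn : 0 < n) (hord : orderOf θ = n)
    (α : Fin n → M) (hsp : Submodule.span (fixedSubfield θ) (Set.range α) = ⊤)
    {N : ℕ} (k : Fin N → Fin n) (hk : Function.Injective k)
    (h : Fin N → M) (hyp : ∀ e : ℕ, ∑ row, h row * (θ ^ e) (α (k row)) = 0) :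
    h = 0 := by
  classical
  haveI : Nonempty (Fin n) := ⟨⟨0, hn⟩⟩
  set T : Fin n → (Fin n → M) := fun e m => (θ ^ (e : ℕ)) (α m) with hT
  have liT : LinearIndependent M T := by
    rw [Fintype.linearIndependent_iff]
    intro y hy
    have hy' : ∀ m : Fin n, ∑ e : Fin n, y e * (θ ^ (e : ℕ)) (α m) = 0 := by
      intro m
      have := congrFun hy m
      simpa [T, Finset.sum_apply] using this
    have hall : ∀ x : M, ∑ e : Fin n, y e * (θ ^ (e : ℕ)) x = 0 := by
      intro x
      have hx : x ∈ Submodule.span (fixedSubfield θ) (Set.range α) := by rw [hsp]; trivial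
      induction hx using Submodule.span_induction with
      | mem z hz =>
        obtain ⟨m, rfl⟩ := hz
        exact hy' m
      | zero => simp
      | add a b ha hb iha ihb =>
        simp only [map_add, mul_add, Finset.sum_add_distrib, iha, ihb, add_zero]
      | smul a z hz ihz =>
        have hfix : ∀ e : ℕ, (θ ^ e) ((a : M)) = (a : M) := fun e => pow_fixed a.2 e
        have hsmul : a • z = (a : M) * z := rfl
        calc ∑ e : Fin n, y e * (θ ^ (e : ℕ)) (a • z)
            = ∑ e : Fin n, (a : M) * (y e * (θ ^ (e : ℕ)) z) := by
              refine Finset.sum_congr rfl fun e _ => ?_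
              rw [hsmul, map_mul, hfix]; ring
          _ = (a : M) * ∑ e : Fin n, y e * (θ ^ (e : ℕ)) z := by rw [Finset.mul_sum]
          _ = 0 := by rw [ihz, mul_zero]
    exact dedekind θ n
      (fun a b ha hb => pow_injOn_Iio_orderOf
        (by simpa [Set.mem_Iio, hord] using ha) (by simpa [Set.mem_Iio, hord] using hb))
      y hall
  have hcard : Fintype.card (Fin n) = Module.finrank M (Fin n → M) := by
    simp [Module.finrank_pi]
  have hspanT : Submodule.span M (Set.range T) = ⊤ :=
    liT.span_eq_top_of_card_eq_finrank hcard
  set x : Fin n → M := fun m => ∑ row, if k row = m then h row else 0 with hx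
  have hperp : ∀ z : Fin n → M, ∑ m, z m * x m = 0 := by
    intro z
    have hz : z ∈ Submodule.span M (Set.range T) := by rw [hspanT]; trivial
    induction hz using Submodule.span_induction with
    | mem z hz =>
      obtain ⟨e, rfl⟩ := hz
      calc ∑ m, T e m * x m
          = ∑ m, ∑ row, (if k row = m then T e m * h row else 0) := by
            refine Finset.sum_congr rfl fun m _ => ?_
            rw [hx, Finset.mul_sum]
            exact Finset.sum_congr rfl fun row _ => by split <;> simp
        _ = ∑ row, ∑ m, (if k row = m then T e m * h row else 0) := Finset.sum_comm
        _ = ∑ row, T e (k row) * h row := by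
            refine Finset.sum_congr rfl fun row _ => ?_
            simp [Finset.sum_ite_eq]
        _ = ∑ row, h row * (θ ^ (e : ℕ)) (α (k row)) := by
            exact Finset.sum_congr rfl fun row _ => mul_comm _ _
        _ = 0 := hyp e
    | zero => simp
    | add a b ha hb iha ihb =>
      simp only [Pi.add_apply, add_mul, Finset.sum_add_distrib, iha, ihb, add_zero]
    | smul a z hz ihz =>
      calc ∑ m, (a • z) m * x m = a * ∑ m, z m * x m := by
            rw [Finset.mul_sum]
            exact Finset.sum_congr rfl fun m _ => by simp [mul_assoc]
        _ = 0 := by rw [ihz, mul_zero]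
  have hx0 : ∀ m, x m = 0 := by
    intro m
    have := hperp (Pi.single m 1)
    simpa [Pi.single_apply, Finset.sum_ite_eq'] using this
  funext row
  have h1 := hx0 (k row)
  rw [hx] at h1
  have h2 : ∑ row', (if k row' = k row then h row' else 0) = h row := by
    rw [Finset.sum_congr rfl (fun row' _ => if_congr hk.eq_iff rfl rfl)]
    simp [Finset.sum_ite_eq']
  simp only [h2] at h1
  simpa using h1

private noncomputable def dotRestrict {N : ℕ} (C : Submodule M (Fin N → M)) :
    (Fin N → M) →ₗ[M] Module.Dual M ↥C where
  toFun hv :=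
    { toFun := fun c => ∑ row, hv row * (c : Fin N → M) row
      map_add' := by
        intro c₁ c₂
        simp [mul_add, Finset.sum_add_distrib]
      map_smul' := by
        intro a c
        simp only [SetLike.val_smul, Pi.smul_apply, smul_eq_mul, RingHom.id_apply]
        rw [Finset.mul_sum]
        exact Finset.sum_congr rfl fun row _ => by ring }
  map_add' := by
    intro x y
    ext c
    simp [add_mul, Finset.sum_add_distrib]
  map_smul' := by
    intro a x
    ext c
    simp only [LinearMap.coe_mk, AddHom.coe_mk, Pi.smul_apply, smul_eq_mul,
      RingHom.id_apply, LinearMap.smul_apply]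
    rw [Finset.mul_sum]
    exact Finset.sum_congr rfl fun row _ => by ring

private lemma dotRestrict_apply {N : ℕ} (C : Submodule M (Fin N → M)) (h : Fin N → M)
    (c : ↥C) : dotRestrict C h c = ∑ row, h row * (c : Fin N → M) row := rfl

private lemma sum_shift (φ : M ≃+* M) (y : M) :
    ∑ ℓ ∈ Finset.range (orderOf φ), (φ ^ (ℓ + 1)) y
      = ∑ ℓ ∈ Finset.range (orderOf φ), (φ ^ ℓ) y := by
  have h1 := Finset.sum_range_succ (fun ℓ => (φ ^ ℓ) y) (orderOf φ)
  have h2 := Finset.sum_range_succ' (fun ℓ => (φ ^ ℓ) y) (orderOf φ)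
  have h3 : (φ ^ orderOf φ) y = y := by rw [pow_orderOf_eq_one]; rfl
  have h4 : (φ ^ (0 : ℕ)) y = y := by rw [pow_zero]; rfl
  have h5 := h1.symm.trans h2
  rw [h3, h4] at h5
  exact (add_right_cancel h5).symm

/-- In a subspace `C` of `M^N` of dimension `< N` that is stable under the entrywise
action of `φ`, there is a nonzero `φ`-fixed vector orthogonal to `C`. -/
private lemma exists_fixed_perp (φ : M ≃+* M) (hφ : IsOfFinOrder φ)
    {N : ℕ} (C : Submodule M (Fin N → M))
    (hC : ∀ c ∈ C, (fun row => φ (c row)) ∈ C)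
    (hrank : Module.finrank M ↥C < N) :
    ∃ h : Fin N → M, h ≠ 0 ∧ (∀ row, φ (h row) = h row) ∧
      ∀ c ∈ C, ∑ row, h row * c row = 0 := by
  classical
  have hn'0 : 0 < orderOf φ := hφ.orderOf_pos
  -- iterated stability (for any submodule)
  have hCpow : ∀ (P : Submodule M (Fin N → M)), (∀ c ∈ P, (fun row => φ (c row)) ∈ P) →
      ∀ m : ℕ, ∀ c ∈ P, (fun row => (φ ^ m) (c row)) ∈ P := by
    intro P hP m
    induction m with
    | zero =>
      intro c hc
      have : (fun row => (φ ^ (0 : ℕ)) (c row)) = c := by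
        funext row; rw [pow_zero]; rfl
      rwa [this]
    | succ m IHm =>
      intro c hc
      have h1 := hP _ (IHm c hc)
      have : (fun row => (φ ^ (m + 1)) (c row)) = fun row => φ ((φ ^ m) (c row)) := by
        funext row; rw [pow_succ', mulApply']
      rwa [this]
  have hCsymm : ∀ c ∈ C, (fun row => φ.symm (c row)) ∈ C := by
    intro c hc
    have h1 := hCpow C hC (orderOf φ - 1) c hc
    have h2 : ∀ x : M, φ.symm x = (φ ^ (orderOf φ - 1)) x := by
      intro x
      have h3 : φ ((φ ^ (orderOf φ - 1)) x) = x := by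
        rw [← mulApply', ← pow_succ', show orderOf φ - 1 + 1 = orderOf φ by omega,
          pow_orderOf_eq_one]
        rfl
      apply φ.injective
      rw [RingEquiv.apply_symm_apply, h3]
    have : (fun row => φ.symm (c row)) = fun row => (φ ^ (orderOf φ - 1)) (c row) := by
      funext row; rw [h2]
    rwa [this]
  -- the kernel of the "dot with C" map
  have memker : ∀ h' : Fin N → M,
      h' ∈ LinearMap.ker (dotRestrict C) ↔ ∀ c ∈ C, ∑ row, h' row * c row = 0 := by
    intro h'
    rw [LinearMap.mem_ker]
    constructor
    · intro hg0 c hc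
      have := LinearMap.congr_fun hg0 ⟨c, hc⟩
      simpa [dotRestrict_apply] using this
    · intro hp
      apply LinearMap.ext
      rintro ⟨c, hc⟩
      simpa [dotRestrict_apply] using hp c hc
  have hker : LinearMap.ker (dotRestrict C) ≠ ⊥ := by
    have h1 := LinearMap.finrank_range_add_finrank_ker (dotRestrict C)
    have h2 : Module.finrank M ↥(LinearMap.range (dotRestrict C))
        ≤ Module.finrank M ↥C := by
      calc Module.finrank M ↥(LinearMap.range (dotRestrict C))
          ≤ Module.finrank M (Module.Dual M ↥C) := Submodule.finrank_le _
        _ = Module.finrank M ↥C := Subspace.dual_finrank_eq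
    have h3 : Module.finrank M (Fin N → M) = N := by simp [Module.finrank_pi]
    rw [h3] at h1
    intro hbot
    rw [hbot, finrank_bot] at h1
    omega
  obtain ⟨d, hdker, hd0⟩ := Submodule.exists_mem_ne_zero_of_ne_bot hker
  have hDstab : ∀ x ∈ LinearMap.ker (dotRestrict C),
      (fun row => φ (x row)) ∈ LinearMap.ker (dotRestrict C) := by
    intro x hx
    rw [memker] at hx ⊢
    intro c hc
    have h1 := hx _ (hCsymm c hc)
    calc ∑ row, φ (x row) * c row
        = φ (∑ row, x row * φ.symm (c row)) := by
          rw [map_sum]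
          exact Finset.sum_congr rfl fun row _ => by
            rw [map_mul, RingEquiv.apply_symm_apply]
      _ = φ 0 := by rw [h1]
      _ = 0 := map_zero φ
  obtain ⟨row₀, hrow₀⟩ : ∃ row₀, d row₀ ≠ 0 := by
    by_contra hall
    push_neg at hall
    exact hd0 (funext fun row => hall row)
  have hβ : ∃ β : M, ∑ ℓ ∈ Finset.range (orderOf φ), (φ ^ ℓ) (β * d row₀) ≠ 0 := by
    by_contra hall
    push_neg at hall
    have hded := dedekind φ (orderOf φ)
      (fun a b ha hb => pow_injOn_Iio_orderOf
        (by simpa [Set.mem_Iio] using ha) (by simpa [Set.mem_Iio] using hb))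
      (fun ℓ : Fin (orderOf φ) => (φ ^ (ℓ : ℕ)) (d row₀))
      (by
        intro x
        have h1 := hall x
        rw [← Fin.sum_univ_eq_sum_range (fun ℓ => (φ ^ ℓ) (x * d row₀))] at h1
        calc ∑ ℓ : Fin (orderOf φ), (φ ^ (ℓ : ℕ)) (d row₀) * (φ ^ (ℓ : ℕ)) x
            = ∑ ℓ : Fin (orderOf φ), (φ ^ (ℓ : ℕ)) (x * d row₀) := by
              exact Finset.sum_congr rfl fun ℓ _ => by rw [map_mul, mul_comm]
          _ = 0 := h1)
    have h0 := hded ⟨0, hn'0⟩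
    simp only [pow_zero] at h0
    exact hrow₀ (by simpa using h0)
  obtain ⟨β, hβ⟩ := hβ
  refine ⟨fun row => ∑ ℓ ∈ Finset.range (orderOf φ), (φ ^ ℓ) (β * d row), ?_, ?_, ?_⟩
  · intro h0
    exact hβ (by simpa using congrFun h0 row₀)
  · intro row
    rw [map_sum]
    have h1 : ∀ ℓ ∈ Finset.range (orderOf φ),
        φ ((φ ^ ℓ) (β * d row)) = (φ ^ (ℓ + 1)) (β * d row) := by
      intro ℓ _
      rw [pow_succ', mulApply']
    rw [Finset.sum_congr rfl h1, sum_shift]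
  · intro c hc
    have hmem : (fun row => ∑ ℓ ∈ Finset.range (orderOf φ), (φ ^ ℓ) (β * d row))
        ∈ LinearMap.ker (dotRestrict C) := by
      have heq : (fun row => ∑ ℓ ∈ Finset.range (orderOf φ), (φ ^ ℓ) (β * d row))
          = ∑ ℓ ∈ Finset.range (orderOf φ),
              ((φ ^ ℓ) β) • (fun row => (φ ^ ℓ) (d row)) := by
        funext row
        rw [Finset.sum_apply]
        exact Finset.sum_congr rfl fun ℓ _ => by
          simp [map_mul]
      rw [heq]
      exact Submodule.sum_mem _ fun ℓ _ =>
        Submodule.smul_mem _ _ (hCpow _ hDstab ℓ d hdker)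
    exact (memker _).mp hmem c hc

/-! ### Number-theoretic coverage lemmas -/

private lemma nt1 {s n : ℕ} (hn : 0 < n) (h : Nat.gcd s n = 1) (e : ℕ) :
    ∃ ℓ : ℕ, ℓ * s % n = e % n := by
  have hco : Nat.Coprime s n := h
  have ht : s ^ Nat.totient n ≡ 1 [MOD n] := Nat.ModEq.pow_totient hco
  refine ⟨e * s ^ (Nat.totient n - 1), ?_⟩
  have h1 : e * s ^ (Nat.totient n - 1) * s = e * s ^ Nat.totient n := by
    rw [mul_assoc, ← pow_succ]
    have := Nat.totient_pos.mpr hn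
    congr 2
    omega
  show e * s ^ (Nat.totient n - 1) * s ≡ e [MOD n]
  rw [h1]
  calc e * s ^ Nat.totient n ≡ e * 1 [MOD n] := Nat.ModEq.mul_left e ht
    _ = e := mul_one e

private lemma nt3 {s n : ℕ} (hn : 0 < n) {D : ℕ} (hD : Nat.gcd s n ∣ D) :
    ∃ m : ℕ, m * s ≡ D [MOD n] := by
  have hg : 0 < Nat.gcd s n := Nat.gcd_pos_of_pos_right s hn
  obtain ⟨d, hd⟩ := hD
  have hco : Nat.Coprime (s / Nat.gcd s n) (n / Nat.gcd s n) :=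
    Nat.coprime_div_gcd_div_gcd hg
  have hnd : 0 < n / Nat.gcd s n :=
    Nat.div_pos (Nat.le_of_dvd hn (Nat.gcd_dvd_right s n)) hg
  obtain ⟨m, hm⟩ := nt1 hnd hco d
  refine ⟨m, ?_⟩
  have h2 : Nat.gcd s n * (m * (s / Nat.gcd s n)) ≡ Nat.gcd s n * d
      [MOD Nat.gcd s n * (n / Nat.gcd s n)] := Nat.ModEq.mul_left' _ hm
  rw [Nat.mul_div_cancel' (Nat.gcd_dvd_right s n)] at h2
  have h3 : Nat.gcd s n * (m * (s / Nat.gcd s n)) = m * s := by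
    rw [mul_left_comm, Nat.mul_div_cancel' (Nat.gcd_dvd_left s n)]
  rw [h3, ← hd] at h2
  exact h2

private lemma nt2 {s₁ s₂ n t : ℕ} (hn : 0 < n) (h1 : Nat.gcd s₁ n = 1)
    (hg : Nat.gcd s₂ n ≤ t) (e : ℕ) :
    ∃ j, j < t ∧ ∃ m, (j * s₁ + m * s₂) % n = e % n := by
  have hgpos : 0 < Nat.gcd s₂ n := Nat.gcd_pos_of_pos_right s₂ hn
  have hco : Nat.gcd s₁ (Nat.gcd s₂ n) = 1 := by
    have h' : Nat.gcd s₁ (Nat.gcd s₂ n) ∣ Nat.gcd s₁ n :=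
      Nat.dvd_gcd (Nat.gcd_dvd_left _ _)
        ((Nat.gcd_dvd_right s₁ (Nat.gcd s₂ n)).trans (Nat.gcd_dvd_right s₂ n))
    rw [h1] at h'
    exact Nat.eq_one_of_dvd_one h'
  obtain ⟨ℓ, hℓ⟩ := nt1 hgpos hco e
  refine ⟨ℓ % Nat.gcd s₂ n, lt_of_lt_of_le (Nat.mod_lt _ hgpos) hg, ?_⟩
  have hjg : (ℓ % Nat.gcd s₂ n) * s₁ ≡ e [MOD Nat.gcd s₂ n] :=
    ((Nat.mod_modEq ℓ (Nat.gcd s₂ n)).mul_right s₁).trans hℓ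
  set j := ℓ % Nat.gcd s₂ n with hj
  have h4 : j * s₁ + (n - 1) * (j * s₁) = n * (j * s₁) := by
    have h5 : 1 + (n - 1) = n := by omega
    calc j * s₁ + (n - 1) * (j * s₁) = (1 + (n - 1)) * (j * s₁) := by ring
      _ = n * (j * s₁) := by rw [h5]
  have hDdvd : Nat.gcd s₂ n ∣ e + (n - 1) * (j * s₁) := by
    have h3 : (j * s₁ + (n - 1) * (j * s₁)) % Nat.gcd s₂ n
        = (e + (n - 1) * (j * s₁)) % Nat.gcd s₂ n := Nat.ModEq.add_right _ hjg
    have h5 : Nat.gcd s₂ n ∣ n * (j * s₁) :=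
      Dvd.dvd.mul_right (Nat.gcd_dvd_right s₂ n) _
    apply Nat.dvd_of_mod_eq_zero
    rw [← h3, h4]
    exact Nat.mod_eq_zero_of_dvd h5
  obtain ⟨m, hm⟩ := nt3 hn hDdvd
  refine ⟨m, ?_⟩
  show j * s₁ + m * s₂ ≡ e [MOD n]
  calc j * s₁ + m * s₂ ≡ j * s₁ + (e + (n - 1) * (j * s₁)) [MOD n] :=
        Nat.ModEq.add_left _ hm
    _ = e + n * (j * s₁) := by rw [← h4]; ring
    _ ≡ e + 0 [MOD n] := Nat.ModEq.add_left e
        ((Nat.modEq_zero_iff_dvd).mpr ⟨j * s₁, rfl⟩)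
    _ = e := add_zero e

end RankLemmaAux

section RankLemmaMain

open Submodule Module

/-- The column vector `(θ^e (α (k row)))_row`. -/
private noncomputable def wv (θ : M ≃+* M) {n : ℕ} (α : Fin n → M) {N : ℕ}
    (k : Fin N → Fin n) (e : ℕ) : Fin N → M :=
  fun row => (θ ^ e) (α (k row))

private lemma main_key (θ : M ≃+* M) (n : ℕ) (hn : 0 < n) (hord : orderOf θ = n)
    (α : Fin n → M)
    (hli : LinearIndependent (fixedSubfield θ) α)
    (hsp : Submodule.span (fixedSubfield θ) (Set.range α) = ⊤)
    (t r : ℕ) (ht : 1 ≤ t) (htr : t + r ≤ n)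
    (k : Fin (t + r) → Fin n) (hk : Function.Injective k)
    (s₁ s₂ : ℕ) (hgcd₁ : Nat.gcd s₁ n = 1) (hgcd₂ : Nat.gcd s₂ n ≤ t) :
    ∀ i, i ≤ r → t + i ≤ Module.finrank M ↥(Submodule.span M
      {x : Fin (t + r) → M | ∃ ℓ j : ℕ, ℓ ≤ i ∧ j < t ∧
        x = wv θ α k (ℓ * s₂ + j * s₁)}) := by
  classical
  have hford : IsOfFinOrder θ := by
    rw [← orderOf_pos_iff, hord]; exact hn
  intro i
  induction i with
  | zero =>
    intro _
    by_contra hcon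
    push_neg at hcon
    have hS : ∀ m : ℕ, m < t → wv θ α k (m * s₁) ∈
        {x : Fin (t + r) → M | ∃ ℓ j : ℕ, ℓ ≤ 0 ∧ j < t ∧
          x = wv θ α k (ℓ * s₂ + j * s₁)} := by
      intro m hm
      exact ⟨0, m, le_rfl, hm, by rw [show (0 : ℕ) * s₂ + m * s₁ = m * s₁ by ring]⟩
    have hex : ∃ j, j < t ∧ wv θ α k (j * s₁) ∈
        Submodule.span M ((fun m => wv θ α k (m * s₁)) '' Set.Iio j) := by
      by_contra hno
      push_neg at hno
      have li : ∀ q, q ≤ t → LinearIndependent M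
          (fun jj : Fin q => wv θ α k ((jj : ℕ) * s₁)) := by
        intro q
        induction q with
        | zero => intro _; exact linearIndependent_empty_type
        | succ q IHq =>
          intro hq
          have h1 := IHq (by omega)
          have hrange : (Set.range fun jj : Fin q => wv θ α k ((jj : ℕ) * s₁))
              = (fun m => wv θ α k (m * s₁)) '' Set.Iio q := by
            ext z
            constructor
            · rintro ⟨jj, rfl⟩; exact ⟨jj, jj.isLt, rfl⟩
            · rintro ⟨m, hm, rfl⟩; exact ⟨⟨m, hm⟩, rfl⟩
          have h2 : wv θ α k (q * s₁) ∉
              Submodule.span M (Set.range fun jj : Fin q => wv θ α k ((jj : ℕ) * s₁)) := by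
            rw [hrange]; exact hno q (by omega)
          have h3 : (fun jj : Fin (q + 1) => wv θ α k ((jj : ℕ) * s₁))
              = Fin.snoc (fun jj : Fin q => wv θ α k ((jj : ℕ) * s₁)) (wv θ α k (q * s₁)) := by
            funext jj
            refine Fin.lastCases ?_ ?_ jj
            · simp
            · intro jj'
              simp
          rw [h3, linearIndependent_fin_snoc]
          exact ⟨h1, h2⟩
      have hcard := finrank_span_eq_card (li t le_rfl)
      have hrt : (Set.range fun jj : Fin t => wv θ α k ((jj : ℕ) * s₁))
          = {x : Fin (t + r) → M | ∃ ℓ j : ℕ, ℓ ≤ 0 ∧ j < t ∧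
              x = wv θ α k (ℓ * s₂ + j * s₁)} := by
        ext z
        constructor
        · rintro ⟨jj, rfl⟩
          exact ⟨0, jj, le_rfl, jj.isLt, by rw [show (0 : ℕ) * s₂ + (jj : ℕ) * s₁ = (jj : ℕ) * s₁ by ring]⟩
        · rintro ⟨ℓ, j, hℓ, hj, rfl⟩
          have hℓ0 : ℓ = 0 := by omega
          subst hℓ0
          exact ⟨⟨j, hj⟩, by rw [show (0 : ℕ) * s₂ + j * s₁ = j * s₁ by ring]⟩
      rw [hrt, Fintype.card_fin] at hcard
      omega
    obtain ⟨j₀, hj₀t, hj₀⟩ := hex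
    rcases Nat.eq_zero_or_pos j₀ with hz | hpos
    · subst hz
      have hio : ((fun m => wv θ α k (m * s₁)) '' Set.Iio (0 : ℕ)) = ∅ := by
        have : Set.Iio (0 : ℕ) = ∅ := by ext m; simp
        rw [this, Set.image_empty]
      rw [hio, Submodule.span_empty, Submodule.mem_bot] at hj₀
      have h0 := congrFun hj₀ ⟨0, by omega⟩
      have h0' : α (k ⟨0, by omega⟩) = 0 := by
        simpa [wv, oneApply'] using h0
      exact hli.ne_zero (k ⟨0, by omega⟩) h0'
    · have hstab : ∀ c ∈ Submodule.span M ((fun m => wv θ α k (m * s₁)) '' Set.Iio j₀),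
          (fun row => (θ ^ s₁) (c row)) ∈
            Submodule.span M ((fun m => wv θ α k (m * s₁)) '' Set.Iio j₀) := by
        intro c hc
        induction hc using Submodule.span_induction with
        | mem z hz =>
          obtain ⟨m, hm, rfl⟩ := hz
          have hm2 : m < j₀ := hm
          have hz2 : (fun row => (θ ^ s₁) (wv θ α k (m * s₁) row))
              = wv θ α k ((m + 1) * s₁) := by
            funext row
            show (θ ^ s₁) ((θ ^ (m * s₁)) (α (k row))) = (θ ^ ((m + 1) * s₁)) (α (k row))
            rw [← mulApply', ← pow_add, show s₁ + m * s₁ = (m + 1) * s₁ by ring]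
          rw [hz2]
          rcases Nat.lt_or_ge (m + 1) j₀ with hlt | hge
          · exact Submodule.subset_span ⟨m + 1, hlt, rfl⟩
          · have hmj : m + 1 = j₀ := by omega
            rw [hmj]
            exact hj₀
        | zero =>
          have : (fun row : Fin (t + r) => (θ ^ s₁) ((0 : Fin (t + r) → M) row)) = 0 := by
            funext row; simp
          rw [this]
          exact Submodule.zero_mem _
        | add a b ha hb iha ihb =>
          have : (fun row => (θ ^ s₁) ((a + b) row))
              = (fun row => (θ ^ s₁) (a row)) + (fun row => (θ ^ s₁) (b row)) := by
            funext row; simp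
          rw [this]
          exact Submodule.add_mem _ iha ihb
        | smul a z hz ihz =>
          have : (fun row => (θ ^ s₁) ((a • z) row))
              = ((θ ^ s₁) a) • (fun row => (θ ^ s₁) (z row)) := by
            funext row
            simp [map_mul]
          rw [this]
          exact Submodule.smul_mem _ _ ihz
      have hrankb : Module.finrank M
          ↥(Submodule.span M ((fun m => wv θ α k (m * s₁)) '' Set.Iio j₀)) < t + r := by
        have hle : Submodule.span M ((fun m => wv θ α k (m * s₁)) '' Set.Iio j₀)
            ≤ Submodule.span M {x : Fin (t + r) → M | ∃ ℓ j : ℕ, ℓ ≤ 0 ∧ j < t ∧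
                x = wv θ α k (ℓ * s₂ + j * s₁)} := by
          apply Submodule.span_le.mpr
          rintro z ⟨m, hm, rfl⟩
          have hm2 : m < j₀ := hm
          exact Submodule.subset_span (hS m (by omega))
        have hmono := Submodule.finrank_mono hle
        omega
      obtain ⟨h, hh0, hhfix, hhperp⟩ := exists_fixed_perp (θ ^ s₁) (hford.pow)
        (Submodule.span M ((fun m => wv θ α k (m * s₁)) '' Set.Iio j₀)) hstab hrankb
      have hbase : ∑ row, h row * α (k row) = 0 := by
        have hmem : wv θ α k (0 * s₁) ∈
            Submodule.span M ((fun m => wv θ α k (m * s₁)) '' Set.Iio j₀) :=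
          Submodule.subset_span ⟨0, hpos, rfl⟩
        have := hhperp _ hmem
        simpa [wv, oneApply'] using this
      have hcov : ∀ e : ℕ, ∑ row, h row * (θ ^ e) (α (k row)) = 0 := by
        intro e
        obtain ⟨ℓ, hℓ⟩ := nt1 hn hgcd₁ e
        have hfix : ∀ row, (θ ^ (ℓ * s₁)) (h row) = h row := by
          intro row
          have := pow_fixed (hhfix row) ℓ
          rwa [← pow_mul, show s₁ * ℓ = ℓ * s₁ by ring] at this
        have heq : (θ ^ (ℓ * s₁)) = (θ ^ e : M ≃+* M) := pow_congr θ hord hℓ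
        have hc := congrArg (θ ^ (ℓ * s₁)) hbase
        rw [map_sum] at hc
        simp only [map_mul, hfix] at hc
        rw [heq] at hc
        simpa using hc
      exact hh0 (perp_all_zero θ hn hord α hsp k hk h hcov)
  | succ i IH =>
    intro hi1
    by_contra hcon
    push_neg at hcon
    have hle : Submodule.span M {x : Fin (t + r) → M | ∃ ℓ j : ℕ, ℓ ≤ i ∧ j < t ∧
          x = wv θ α k (ℓ * s₂ + j * s₁)}
        ≤ Submodule.span M {x : Fin (t + r) → M | ∃ ℓ j : ℕ, ℓ ≤ i + 1 ∧ j < t ∧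
          x = wv θ α k (ℓ * s₂ + j * s₁)} := by
      apply Submodule.span_mono
      rintro z ⟨ℓ, j, hℓ, hj, rfl⟩
      exact ⟨ℓ, j, by omega, hj, rfl⟩
    have hIH := IH (by omega)
    have hfr := Submodule.finrank_mono hle
    have heq : Submodule.span M {x : Fin (t + r) → M | ∃ ℓ j : ℕ, ℓ ≤ i ∧ j < t ∧
          x = wv θ α k (ℓ * s₂ + j * s₁)}
        = Submodule.span M {x : Fin (t + r) → M | ∃ ℓ j : ℕ, ℓ ≤ i + 1 ∧ j < t ∧
          x = wv θ α k (ℓ * s₂ + j * s₁)} :=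
      Submodule.eq_of_le_of_finrank_le hle (by omega)
    have hstab : ∀ c ∈ Submodule.span M {x : Fin (t + r) → M | ∃ ℓ j : ℕ, ℓ ≤ i ∧ j < t ∧
          x = wv θ α k (ℓ * s₂ + j * s₁)},
        (fun row => (θ ^ s₂) (c row)) ∈
          Submodule.span M {x : Fin (t + r) → M | ∃ ℓ j : ℕ, ℓ ≤ i ∧ j < t ∧
            x = wv θ α k (ℓ * s₂ + j * s₁)} := by
      intro c hc
      induction hc using Submodule.span_induction with
      | mem z hz =>
        obtain ⟨ℓ, j, hℓ, hj, rfl⟩ := hz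
        have hz2 : (fun row => (θ ^ s₂) (wv θ α k (ℓ * s₂ + j * s₁) row))
            = wv θ α k ((ℓ + 1) * s₂ + j * s₁) := by
          funext row
          show (θ ^ s₂) ((θ ^ (ℓ * s₂ + j * s₁)) (α (k row)))
              = (θ ^ ((ℓ + 1) * s₂ + j * s₁)) (α (k row))
          rw [← mulApply', ← pow_add,
            show s₂ + (ℓ * s₂ + j * s₁) = (ℓ + 1) * s₂ + j * s₁ by ring]
        rw [hz2, heq]
        exact Submodule.subset_span ⟨ℓ + 1, j, by omega, hj, rfl⟩
      | zero =>
        have : (fun row : Fin (t + r) => (θ ^ s₂) ((0 : Fin (t + r) → M) row)) = 0 := by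
          funext row; simp
        rw [this]
        exact Submodule.zero_mem _
      | add a b ha hb iha ihb =>
        have : (fun row => (θ ^ s₂) ((a + b) row))
            = (fun row => (θ ^ s₂) (a row)) + (fun row => (θ ^ s₂) (b row)) := by
          funext row; simp
        rw [this]
        exact Submodule.add_mem _ iha ihb
      | smul a z hz ihz =>
        have : (fun row => (θ ^ s₂) ((a • z) row))
            = ((θ ^ s₂) a) • (fun row => (θ ^ s₂) (z row)) := by
          funext row
          simp [map_mul]
        rw [this]
        exact Submodule.smul_mem _ _ ihz
    have hrank : Module.finrank M
        ↥(Submodule.span M {x : Fin (t + r) → M | ∃ ℓ j : ℕ, ℓ ≤ i ∧ j < t ∧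
          x = wv θ α k (ℓ * s₂ + j * s₁)}) < t + r := by
      omega
    obtain ⟨h, hh0, hhfix, hhperp⟩ := exists_fixed_perp (θ ^ s₂) (hford.pow)
      (Submodule.span M {x : Fin (t + r) → M | ∃ ℓ j : ℕ, ℓ ≤ i ∧ j < t ∧
        x = wv θ α k (ℓ * s₂ + j * s₁)}) hstab hrank
    have hbase : ∀ j, j < t → ∑ row, h row * (θ ^ (j * s₁)) (α (k row)) = 0 := by
      intro j hj
      have hmem : wv θ α k (j * s₁) ∈
          Submodule.span M {x : Fin (t + r) → M | ∃ ℓ j : ℕ, ℓ ≤ i ∧ j < t ∧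
            x = wv θ α k (ℓ * s₂ + j * s₁)} :=
        Submodule.subset_span ⟨0, j, by omega, hj,
          by rw [show (0 : ℕ) * s₂ + j * s₁ = j * s₁ by ring]⟩
      exact hhperp _ hmem
    have hcov : ∀ e : ℕ, ∑ row, h row * (θ ^ e) (α (k row)) = 0 := by
      intro e
      obtain ⟨j, hjt, m, hm⟩ := nt2 hn hgcd₁ hgcd₂ e
      have hfix : ∀ row, (θ ^ (m * s₂)) (h row) = h row := by
        intro row
        have := pow_fixed (hhfix row) m
        rwa [← pow_mul, show s₂ * m = m * s₂ by ring] at this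
      have hc := congrArg (θ ^ (m * s₂)) (hbase j hjt)
      rw [map_sum] at hc
      simp only [map_mul, hfix] at hc
      have h3 : ∀ row, (θ ^ (m * s₂)) ((θ ^ (j * s₁)) (α (k row)))
          = (θ ^ e) (α (k row)) := by
        intro row
        rw [← mulApply', ← pow_add]
        rw [pow_congr θ hord (show (m * s₂ + j * s₁) % n = e % n by
          rw [show m * s₂ + j * s₁ = j * s₁ + m * s₂ by ring]; exact hm)]
      simp only [h3] at hc
      simpa using hc
    exact hh0 (perp_all_zero θ hn hord α hsp k hk h hcov)

end RankLemmaMain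

/-- **rank lemma.** With `{α₀, …, α_{n-1}}` a `K`-basis of `M` (`K = M^θ`,
`θ` of order `n`), `t ≥ 1`, `r ≥ 0`, `t + r ≤ n`, distinct indices `k₁, …, k_{t+r}`,
`gcd(s₁, n) = 1` and `gcd(s₂, n) < t + 1`, the block matrix
`B_i = (A | θ^{s₂}(A) | ⋯ | θ^{i s₂}(A))`, where `A` has `(row, j)` entry
`θ^{(j-1)s₁}(α_{k_row})` and `θ` acts entrywise, has rank at least `t + i`, for `0 ≤ i ≤ r`.
(The column indexed by `(ℓ, j)` of `B_i` has entries `θ^{ℓ s₂}(θ^{(j-1)s₁}(α_{k_row}))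
= θ^{ℓ s₂ + (j-1) s₁}(α_{k_row})`.) -/
theorem rank_of_block_circulant {M : Type*} [Field M] (θ : M ≃+* M) (n : ℕ)
    (hord : orderOf θ = n) (α : Fin n → M)
    (hli : LinearIndependent (fixedSubfield θ) α)
    (hsp : Submodule.span (fixedSubfield θ) (Set.range α) = ⊤)
    (t r : ℕ) (ht : 1 ≤ t) (htr : t + r ≤ n)
    (k : Fin (t + r) → Fin n) (hk : Function.Injective k)
    (s₁ s₂ : ℕ) (hs₁ : 0 < s₁) (hs₂ : 0 < s₂)
    (hgcd₁ : Nat.gcd s₁ n = 1) (hgcd₂ : Nat.gcd s₂ n < t + 1)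
    (i : ℕ) (hi : i ≤ r) :
    t + i ≤ (Matrix.of fun (row : Fin (t + r)) (col : Fin (i + 1) × Fin t) =>
      (θ ^ ((col.1 : ℕ) * s₂ + (col.2 : ℕ) * s₁)) (α (k row))).rank := by
  classical
  have hn : 0 < n := by omega
  rw [Matrix.rank_eq_finrank_span_cols]
  have hset : Set.range (Matrix.col (Matrix.of
      fun (row : Fin (t + r)) (col : Fin (i + 1) × Fin t) =>
      (θ ^ ((col.1 : ℕ) * s₂ + (col.2 : ℕ) * s₁)) (α (k row))))
      = {x : Fin (t + r) → M | ∃ ℓ j : ℕ, ℓ ≤ i ∧ j < t ∧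
          x = wv θ α k (ℓ * s₂ + j * s₁)} := by
    ext x
    constructor
    · rintro ⟨c, rfl⟩
      exact ⟨c.1, c.2, Nat.lt_succ_iff.mp c.1.isLt, c.2.isLt, rfl⟩
    · rintro ⟨ℓ, j, hℓ, hj, rfl⟩
      exact ⟨(⟨ℓ, by omega⟩, ⟨j, hj⟩), rfl⟩
  rw [hset]
  exact main_key θ n hn hord α hli hsp t r ht htr k hk s₁ s₂ hgcd₁ (by omega) i hi
end

section
/- Let g ∈ R be a right divisor of x^n − 1 of degree < n, and let C ⊆ L^n be the skew cyclic code it defines. Suppose there exist integers b ≥ 0, δ ≥ 2, r ≥ 0, t_1, t_2 with δ + r − 1 ≤ n, gcd(n, t_1) = 1 and gcd(n, t_2) < δ, such that {b + i·t_1 + ℓ·t_2 mod n : 0 ≤ i ≤ δ−2, 0 ≤ ℓ ≤ r} ⊆ T_β(g). Then the minimum Hamming distance of C is at least δ + r (Hartmann–Tzeng bound for skew cyclic codes). -/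
/-! Skew polynomials over a field `M` twisted by a ring automorphism `θ` (`x·a = θ(a)·x`),
modeled as finitely supported functions `ℕ →₀ M` (coefficient of `xⁱ` at `i`),
with left-coefficient multiplication `(Σᵢ aᵢ xⁱ)·(Σⱼ bⱼ xʲ) = Σᵢⱼ aᵢ θⁱ(bⱼ) x^{i+j}`. -/

variable {M : Type*} [Field M]

section HTHelpers

open scoped Classical

variable {M : Type*} [Field M]

lemma mem_fixedSubfield (φ : M ≃+* M) {a : M} : a ∈ fixedSubfield φ ↔ φ a = a := Iff.rfl

/-- `φ` as a `fixedSubfield φ`-linear map. -/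
noncomputable def fixLin (φ : M ≃+* M) : M →ₗ[fixedSubfield φ] M where
  toFun := φ
  map_add' := map_add φ
  map_smul' := by
    intro r x
    have hr : φ (r : M) = (r : M) := r.2
    show φ ((r : M) * x) = (r : M) * φ x
    rw [map_mul, hr]

lemma moore_aux (φ : M ≃+* M) {N : ℕ} :
    ∀ (s : ℕ) (v m : Fin N → M),
      LinearIndependent (fixedSubfield φ) v →
      (∀ k : ℕ, ∑ j, m j * (φ ^ k) (v j) = 0) →
      (Finset.univ.filter fun j => m j ≠ 0).card ≤ s → m = 0 := by
  intro s
  induction s with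
  | zero =>
    intro v m _ _ hcard
    funext j
    show m j = 0
    by_contra hj
    have : j ∈ Finset.univ.filter fun j => m j ≠ 0 := by simp [hj]
    have := Finset.card_pos.mpr ⟨j, this⟩
    omega
  | succ s ih =>
    intro v m hv h hcard
    by_cases hm : m = 0
    · exact hm
    exfalso
    obtain ⟨j0, hj0⟩ := Function.ne_iff.mp hm
    have hj0' : m j0 ≠ 0 := hj0
    set m' : Fin N → M := fun j => (m j0)⁻¹ * m j with hm'def
    have h' : ∀ k : ℕ, ∑ j, m' j * (φ ^ k) (v j) = 0 := by
      intro k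
      have : ∑ j, m' j * (φ ^ k) (v j) = (m j0)⁻¹ * ∑ j, m j * (φ ^ k) (v j) := by
        rw [Finset.mul_sum]
        exact Finset.sum_congr rfl fun j _ => by ring
      rw [this, h k, mul_zero]
    set d : Fin N → M := fun j => m' j - φ (m' j) with hddef
    have hd : ∀ k : ℕ, ∑ j, d j * (φ ^ k) ((φ ∘ v) j) = 0 := by
      intro k
      have e1 : ∀ j, (φ ^ k) ((φ ∘ v) j) = (φ ^ (k+1)) (v j) := fun j => by
        rw [pow_succ]; rfl
      have : ∑ j, d j * (φ ^ k) ((φ ∘ v) j)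
          = ∑ j, m' j * (φ ^ (k+1)) (v j) - φ (∑ j, m' j * (φ ^ k) (v j)) := by
        rw [map_sum, ← Finset.sum_sub_distrib]
        refine Finset.sum_congr rfl fun j _ => ?_
        rw [e1, map_mul]
        have : φ ((φ ^ k) (v j)) = (φ ^ (k+1)) (v j) := by rw [pow_succ']; rfl
        rw [this, hddef]
        ring
      rw [this, h' (k+1), h' k, map_zero, sub_zero]
    have hvφ : LinearIndependent (fixedSubfield φ) (φ ∘ v) :=
      hv.map' (fixLin φ) (LinearMap.ker_eq_bot.mpr φ.injective)
    have hsub : (Finset.univ.filter fun j => d j ≠ 0)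
        ⊆ (Finset.univ.filter fun j => m j ≠ 0).erase j0 := by
      intro j hjmem
      simp only [Finset.mem_filter, Finset.mem_univ, true_and] at hjmem
      refine Finset.mem_erase.mpr ⟨?_, ?_⟩
      · rintro rfl
        apply hjmem
        show m' j - φ (m' j) = 0
        have : m' j = 1 := inv_mul_cancel₀ hj0'
        rw [this, map_one, sub_self]
      · simp only [Finset.mem_filter, Finset.mem_univ, true_and]
        intro hmj
        apply hjmem
        show m' j - φ (m' j) = 0
        have : m' j = 0 := by rw [hm'def]; simp [hmj]
        rw [this, map_zero, sub_self]
    have hj0mem : j0 ∈ Finset.univ.filter fun j => m j ≠ 0 := by simp [hj0']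
    have hdcard : (Finset.univ.filter fun j => d j ≠ 0).card ≤ s := by
      have := Finset.card_le_card hsub
      rw [Finset.card_erase_of_mem hj0mem] at this
      omega
    have hd0 : d = 0 := ih (φ ∘ v) d hvφ hd hdcard
    have hfix : ∀ j, m' j ∈ fixedSubfield φ := by
      intro j
      have := congrFun hd0 j
      simp only [hddef, Pi.zero_apply] at this
      exact (sub_eq_zero.mp this).symm
    have h0 := h' 0
    have hzero : ∑ j ∈ Finset.univ, (⟨m' j, hfix j⟩ : fixedSubfield φ) • v j = 0 := by
      have : ∀ j, (⟨m' j, hfix j⟩ : fixedSubfield φ) • v j = m' j * (φ ^ 0) (v j) := by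
        intro j; rw [pow_zero]; rfl
      rw [Finset.sum_congr rfl fun j _ => this j, h0]
    have := linearIndependent_iff'.mp hv Finset.univ _ hzero j0 (Finset.mem_univ _)
    have : m' j0 = 0 := congrArg Subtype.val this
    rw [hm'def] at this
    simp only [inv_mul_cancel₀ hj0'] at this
    exact one_ne_zero this

lemma moore (φ : M ≃+* M) {N : ℕ} (v m : Fin N → M)
    (hv : LinearIndependent (fixedSubfield φ) v)
    (h : ∀ k : ℕ, ∑ j, m j * (φ ^ k) (v j) = 0) : m = 0 :=
  moore_aux φ _ v m hv h le_rfl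

/-- `γ·θ(γ)⋯θ^{j-1}(γ)`. -/
noncomputable def nrm (θ : M ≃+* M) (γ : M) (j : ℕ) : M := ∏ m ∈ Finset.range j, (θ ^ m) γ

/-- Right evaluation at `γ`: `f ↦ ∑ f_j · N_j(γ)`. -/
noncomputable def Eval (θ : M ≃+* M) (γ : M) : (ℕ →₀ M) →+ M :=
  AddMonoidHom.mk' (fun f => f.sum fun j a => a * nrm θ γ j) (by
    intro f g
    exact Finsupp.sum_add_index' (fun i => zero_mul (nrm θ γ i))
      (fun i b₁ b₂ => add_mul b₁ b₂ (nrm θ γ i)))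

lemma Eval_single (θ : M ≃+* M) (γ : M) (i : ℕ) (a : M) :
    Eval θ γ (Finsupp.single i a) = a * nrm θ γ i := by
  show (Finsupp.single i a).sum (fun j a => a * nrm θ γ j) = a * nrm θ γ i
  exact Finsupp.sum_single_index (zero_mul _)

lemma nrm_add (θ : M ≃+* M) (γ : M) (i j : ℕ) :
    nrm θ γ (i + j) = nrm θ γ i * (θ ^ i) (nrm θ γ j) := by
  unfold nrm
  rw [Finset.prod_range_add, map_prod]
  congr 1
  refine Finset.prod_congr rfl fun m _ => ?_
  rw [pow_add]
  rfl

lemma Eval_sMul (θ : M ≃+* M) (γ : M) (u v : ℕ →₀ M) (h : Eval θ γ v = 0) :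
    Eval θ γ (sMul θ u v) = 0 := by
  unfold sMul
  rw [Finsupp.sum, map_sum]
  refine Finset.sum_eq_zero fun i _ => ?_
  rw [Finsupp.sum, map_sum]
  have hv : Eval θ γ v = v.sum fun j b => b * nrm θ γ j := rfl
  have : ∀ j ∈ v.support,
      Eval θ γ (Finsupp.single (i + j) (u i * (θ ^ i) (v j)))
        = u i * nrm θ γ i * (θ ^ i) (v j * nrm θ γ j) := by
    intro j _
    rw [Eval_single, nrm_add, map_mul]
    ring
  rw [Finset.sum_congr rfl this, ← Finset.mul_sum, ← map_sum]
  rw [show ∑ j ∈ v.support, v j * nrm θ γ j = Eval θ γ v from rfl, h, map_zero, mul_zero]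

lemma Eval_Xsub (θ : M ≃+* M) (γ : M) : Eval θ γ (Xsub γ) = 0 := by
  unfold Xsub
  rw [map_sub, Eval_single, Eval_single]
  have h1 : nrm θ γ 1 = γ := by
    unfold nrm
    rw [Finset.prod_range_one, pow_zero]
    rfl
  have h0 : nrm θ γ 0 = 1 := by simp [nrm]
  rw [h1, h0, one_mul, mul_one, sub_self]

lemma Eval_vecPoly (θ : M ≃+* M) (γ : M) {n : ℕ} (c : Fin n → M) :
    Eval θ γ (vecPoly c) = ∑ j : Fin n, c j * nrm θ γ (j : ℕ) := by
  unfold vecPoly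
  rw [map_sum]
  exact Finset.sum_congr rfl fun j _ => Eval_single _ _ _ _

lemma nrm_beta (θ : M ≃+* M) (α : M) (hα : α ≠ 0) (K j : ℕ) :
    nrm θ ((θ ^ K) (α⁻¹ * θ α)) j = ((θ ^ K) α)⁻¹ * (θ ^ (K + j)) α := by
  induction j with
  | zero =>
    rw [Nat.add_zero, inv_mul_cancel₀ ((map_ne_zero (θ ^ K)).mpr hα)]
    simp [nrm]
  | succ j ih =>
    rw [show K + (j+1) = (K + j) + 1 from rfl]
    unfold nrm at ih ⊢
    rw [Finset.prod_range_succ, ih]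
    have e1 : (θ ^ j) ((θ ^ K) (α⁻¹ * θ α)) = (θ ^ (K + j)) (α⁻¹ * θ α) := by
      rw [show K + j = j + K from Nat.add_comm K j, pow_add]; rfl
    rw [e1, map_mul, map_inv₀]
    have e2 : (θ ^ (K + j)) (θ α) = (θ ^ (K + j + 1)) α := by rw [pow_succ]; rfl
    rw [e2]
    have hne : (θ ^ (K + j)) α ≠ 0 := (map_ne_zero _).mpr hα
    have hinv := inv_mul_cancel₀ hne
    linear_combination ((θ ^ K) α)⁻¹ * ((θ ^ (K + j + 1)) α) * hinv


end HTHelpers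

section HTHelpers2


/-- Solve `m·t ≡ d (mod n)` for natural `m`, when `gcd(n,t) ∣ d`. -/
lemma exists_mul_modEq (n t : ℕ) (hn : 0 < n) (d : ℤ) (hd : ((Nat.gcd n t : ℕ) : ℤ) ∣ d) :
    ∃ m : ℕ, ((m : ℤ) * t) ≡ d [ZMOD (n : ℤ)] := by
  obtain ⟨c, hc⟩ := hd
  have hg : ((Nat.gcd n t : ℤ)) = n * Nat.gcdA n t + t * Nat.gcdB n t := Nat.gcd_eq_gcd_ab n t
  set m0 : ℤ := Nat.gcdB n t * c with hm0
  have h1 : (m0 * t) ≡ d [ZMOD (n : ℤ)] := by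
    rw [Int.modEq_iff_dvd]
    refine ⟨Nat.gcdA n t * c, ?_⟩
    rw [hm0, hc, hg]; ring
  have hnne : (n : ℤ) ≠ 0 := by exact_mod_cast hn.ne'
  refine ⟨(m0 % n).toNat, ?_⟩
  have hnn : (0:ℤ) ≤ m0 % n := Int.emod_nonneg m0 hnne
  rw [Int.toNat_of_nonneg hnn]
  have h2 : m0 % n ≡ m0 [ZMOD (n : ℤ)] := Int.emod_emod_of_dvd m0 dvd_rfl
  exact (h2.mul_right t).trans h1
/-- Covering with one progression: `gcd(n,t)=1`. -/
lemma cover_one (n t : ℕ) (hn : 0 < n) (h : Nat.gcd n t = 1) (a k : ℕ) :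
    ∃ m : ℕ, (a + m * t) % n = k % n := by
  obtain ⟨m, hm⟩ := exists_mul_modEq n t hn ((k : ℤ) - a) (by rw [h]; exact one_dvd _)
  refine ⟨m, ?_⟩
  have : ((a : ℤ) + m * t) ≡ k [ZMOD (n : ℤ)] := by
    have := hm.add_left (a : ℤ)
    simpa using this
  have hnat : (a + m * t) ≡ k [MOD n] := by
    rw [Nat.modEq_iff_dvd]
    rw [Int.modEq_iff_dvd] at this
    exact_mod_cast this
  exact hnat

/-- Covering with two progressions. -/
lemma cover_two (n t₁ t₂ : ℕ) (hn : 0 < n) (h1 : Nat.gcd n t₁ = 1) (b k : ℕ) :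
    ∃ i < Nat.gcd n t₂, ∃ m : ℕ, (b + i * t₁ + m * t₂) % n = k % n := by
  set e := Nat.gcd n t₂ with he
  have hepos : 0 < e := Nat.gcd_pos_of_pos_left t₂ hn
  haveI : NeZero e := ⟨hepos.ne'⟩
  have hcop : Nat.Coprime t₁ e := by
    have h1' : Nat.Coprime n t₁ := h1
    exact ((Nat.Coprime.coprime_dvd_left (Nat.gcd_dvd_left n t₂) h1')).symm
  set ζ : ZMod e := (((k : ℤ) - b : ℤ) : ZMod e) * ((t₁ : ZMod e))⁻¹ with hζ
  refine ⟨ζ.val, ZMod.val_lt ζ, ?_⟩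
  have hdvd : ((e : ℕ) : ℤ) ∣ ((k : ℤ) - b - (ζ.val : ℤ) * t₁) := by
    rw [← ZMod.intCast_zmod_eq_zero_iff_dvd]
    push_cast
    rw [ZMod.natCast_rightInverse ζ, hζ, mul_assoc, mul_comm ((t₁ : ZMod e))⁻¹ _,
      ZMod.coe_mul_inv_eq_one t₁ hcop, mul_one]
    push_cast
    ring
  obtain ⟨m, hm⟩ := exists_mul_modEq n t₂ hn _ hdvd
  refine ⟨m, ?_⟩
  have : ((b : ℤ) + ζ.val * t₁ + m * t₂) ≡ k [ZMOD (n : ℤ)] := by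
    have := hm.add_left ((b : ℤ) + ζ.val * t₁)
    convert this using 2 <;> ring
  have hnat : (b + ζ.val * t₁ + m * t₂) ≡ k [MOD n] := by
    rw [Nat.modEq_iff_dvd]
    rw [Int.modEq_iff_dvd] at this
    exact_mod_cast this
  exact hnat

lemma span_closure {M : Type*} [Field M] {V : Type*} [AddCommGroup V] [Module M V]
    (τ : M ≃+* M) (Φ : V → V) (hadd : ∀ x y, Φ (x + y) = Φ x + Φ y)
    (hsmul : ∀ (a : M) (x : V), Φ (a • x) = τ a • Φ x)
    (s : Set V) (W : Submodule M V) (hgen : ∀ x ∈ s, Φ x ∈ W) :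
    ∀ v ∈ Submodule.span M s, Φ v ∈ W := by
  intro v hv
  induction hv using Submodule.span_induction with
  | mem x hx => exact hgen x hx
  | zero =>
    have h0 : Φ 0 = 0 := by
      have := hsmul 0 0
      simpa using this
    rw [h0]; exact W.zero_mem
  | add x y _ _ hx hy => rw [hadd]; exact W.add_mem hx hy
  | smul a x _ hx => rw [hsmul]; exact W.smul_mem _ hx

end HTHelpers2

/-- **Hartmann–Tzeng bound for skew cyclic codes.**
Setting: `θ` an automorphism of `M` of order `n = μ·s`, `L = M^{θ^μ}`, `σ = θ|_L`,
`R = L[x;σ] ⊆ S = M[x;θ]`, `α` generating a normal basis of `M/K` (`K = M^θ`) and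
`β = α⁻¹θ(α)`. Let `g ∈ R` be a right divisor of `xⁿ - 1` of degree `< n` and `C ⊆ Lⁿ` the
skew cyclic code it defines. If there are integers `b ≥ 0`, `δ ≥ 2`, `r ≥ 0`, `t₁, t₂` with
`δ + r - 1 ≤ n`, `gcd(n, t₁) = 1`, `gcd(n, t₂) < δ` and
`{b + i·t₁ + ℓ·t₂ mod n : 0 ≤ i ≤ δ-2, 0 ≤ ℓ ≤ r} ⊆ T_β(g)`, then every nonzero codeword of
`C` has Hamming weight at least `δ + r`. -/
theorem hartmann_tzeng_bound_skew {M : Type*} [Field M] (θ : M ≃+* M) (μ s n : ℕ)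
    (hμ : 0 < μ) (hs : 0 < s) (hn : n = μ * s) (hord : orderOf θ = n)
    (α : M) (hα : NormalBasis θ n α) (β : M) (hβ : β = α⁻¹ * θ α)
    (g : ℕ →₀ M) (hgR : inR (θ ^ μ) g)
    (hgdvd : rdvd θ g (XnSubOne n)) (hgdeg : ∀ j, n ≤ j → g j = 0)
    (b δ r t₁ t₂ : ℕ) (hδ : 2 ≤ δ) (hδr : δ + r ≤ n + 1)
    (ht₁ : Nat.gcd n t₁ = 1) (ht₂ : Nat.gcd n t₂ < δ)
    (hT : ∀ i ≤ δ - 2, ∀ l ≤ r,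
      rdvd θ (Xsub ((θ ^ ((b + i * t₁ + l * t₂) % n)) β)) g)
    (c : Fin n → M) (hcL : ∀ j, (θ ^ μ) (c j) = c j)
    (hcC : rdvd θ g (vecPoly c)) (hc0 : c ≠ 0) :
    δ + r ≤ hWt c := by
  classical
  have hn1 : 0 < n := by omega
  -- θ has order n
  have hθn : θ ^ n = 1 := by rw [← hord]; exact pow_orderOf_eq_one θ
  have hpowmod : ∀ a : ℕ, (θ ^ a) = θ ^ (a % n) := by
    intro a
    conv_lhs => rw [← Nat.div_add_mod a n]
    rw [pow_add, pow_mul, hθn, one_pow, one_mul]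
  have hpow_congr : ∀ a a' : ℕ, a % n = a' % n → (θ ^ a) = θ ^ a' := by
    intro a a' h; rw [hpowmod a, hpowmod a', h]
  have hcomp : ∀ (a e : ℕ) (x : M), (θ ^ a) ((θ ^ e) x) = (θ ^ (a + e)) x := by
    intro a e x; rw [pow_add]; rfl
  have hα0 : α ≠ 0 := by
    have h := hα.1.ne_zero ⟨0, hn1⟩
    simpa using h
  -- support of c
  set P : Finset (Fin n) := Finset.univ.filter (fun j => c j ≠ 0) with hP
  have hwt : hWt c = P.card := by
    rw [hWt, show {j : Fin n | c j ≠ 0} = ↑P by ext j; simp [hP], Set.ncard_coe_finset]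
  obtain ⟨j0, hj0⟩ := Function.ne_iff.mp hc0
  have hj0' : c j0 ≠ 0 := hj0
  have hj0P : j0 ∈ P := by simp [hP, hj0']
  -- the linear functional ⟨c, -⟩ on functions on the support
  set f : (P → M) →ₗ[M] M := ∑ j : P, c j • LinearMap.proj j with hf
  have hfapp : ∀ v : P → M, f v = ∑ j : P, c j * v j := by
    intro v
    rw [hf]
    simp [LinearMap.sum_apply, smul_eq_mul]
  have hconv : ∀ F : Fin n → M, (∑ j : P, c j * F j) = ∑ j : Fin n, c j * F j := by
    intro F
    rw [Finset.sum_coe_sort P (fun j => c j * F j)]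
    refine Finset.sum_subset (Finset.subset_univ P) ?_
    intro x _ hx
    have hcx : c x = 0 := by
      by_contra h
      exact hx (by simp [hP, h])
    rw [hcx, zero_mul]
  -- the rows
  set ρ : ℕ → (P → M) := fun k (j : P) => (θ ^ (k + ((j : Fin n) : ℕ))) α with hρ
  have key : ∀ k : ℕ, f (ρ k) = ∑ j : Fin n, c j * (θ ^ (k + (j : ℕ))) α := by
    intro k
    rw [hfapp]
    exact hconv (fun x => (θ ^ (k + (x : ℕ))) α)
  have hρcongr : ∀ a a' : ℕ, a % n = a' % n → ρ a = ρ a' := by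
    intro a a' h
    funext j
    show (θ ^ (a + ((j : Fin n) : ℕ))) α = (θ ^ (a' + ((j : Fin n) : ℕ))) α
    rw [hpow_congr (a + ((j : Fin n) : ℕ)) (a' + ((j : Fin n) : ℕ))
      (Nat.ModEq.add_right _ (h : Nat.ModEq n a a'))]
  have hρshift : ∀ (t a : ℕ), (fun j => (θ ^ t) (ρ a j)) = ρ (a + t) := by
    intro t a
    funext j
    show (θ ^ t) ((θ ^ (a + ((j : Fin n) : ℕ))) α) = (θ ^ (a + t + ((j : Fin n) : ℕ))) α
    rw [hcomp]
    have harith : t + (a + ((j : Fin n) : ℕ)) = a + t + ((j : Fin n) : ℕ) := by omega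
    rw [harith]
  -- the fundamental relations
  have hREL : ∀ K : ℕ, rdvd θ (Xsub ((θ ^ (K % n)) β)) g → f (ρ K) = 0 := by
    intro K hdiv
    obtain ⟨q', hg'⟩ := hdiv
    obtain ⟨q, hc'⟩ := hcC
    have e0 : Eval θ ((θ ^ (K % n)) β) g = 0 := by
      rw [hg']; exact Eval_sMul _ _ _ _ (Eval_Xsub _ _)
    have e1 : Eval θ ((θ ^ (K % n)) β) (vecPoly c) = 0 := by
      rw [hc']; exact Eval_sMul _ _ _ _ e0
    rw [Eval_vecPoly, hβ] at e1
    have e2 : ∀ j : Fin n, c j * nrm θ ((θ ^ (K % n)) (α⁻¹ * θ α)) (j : ℕ)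
        = ((θ ^ (K % n)) α)⁻¹ * (c j * (θ ^ (K % n + (j : ℕ))) α) := by
      intro j
      rw [nrm_beta θ α hα0]
      ring
    rw [Finset.sum_congr rfl (fun j _ => e2 j), ← Finset.mul_sum] at e1
    have hKα : ((θ ^ (K % n)) α) ≠ 0 := (map_ne_zero _).mpr hα0
    have e3 : ∑ j : Fin n, c j * (θ ^ (K % n + (j : ℕ))) α = 0 := by
      rcases mul_eq_zero.mp e1 with h | h
      · exact absurd h (inv_ne_zero hKα)
      · exact h
    rw [key K]
    have e4 : ∀ j : Fin n, c j * (θ ^ (K + (j : ℕ))) α = c j * (θ ^ (K % n + (j : ℕ))) α := by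
      intro j
      rw [hpow_congr (K + (j : ℕ)) (K % n + (j : ℕ))
        (Nat.ModEq.add_right _ ((Nat.mod_modEq K n).symm : Nat.ModEq n K (K % n)))]
    rw [Finset.sum_congr rfl (fun j _ => e4 j)]
    exact e3
  have hRELT : ∀ i ≤ δ - 2, ∀ l ≤ r, f (ρ (b + i * t₁ + l * t₂)) = 0 := by
    intro i hi l hl
    exact hREL _ (hT i hi l hl)
  -- Moore-matrix contradiction
  have hMOORE : (∀ k : ℕ, f (ρ k) = 0) → False := by
    intro hall
    have hrel : ∀ k : ℕ, ∑ j : Fin n, c j * (θ ^ k) ((θ ^ ((j : Fin n) : ℕ)) α) = 0 := by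
      intro k
      have h1 := hall k
      rw [key k] at h1
      rw [Finset.sum_congr rfl (fun j _ => by rw [hcomp k (j : ℕ) α])]
      exact h1
    have := moore θ (fun i : Fin n => (θ ^ (i : ℕ)) α) c hα.1 hrel
    exact hc0 this
  -- the chain of subspaces
  set U : ℕ → Submodule M (P → M) :=
    fun i => Submodule.span M {v | ∃ i' ≤ i, ∃ l ≤ r, v = ρ (b + i' * t₁ + l * t₂)} with hU
  set B : ℕ → Submodule M (P → M) :=
    fun l => Submodule.span M {v | ∃ l' ≤ l, v = ρ (b + l' * t₂)} with hB
  have hUker : ∀ i ≤ δ - 2, U i ≤ LinearMap.ker f := by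
    intro i hi
    rw [hU]
    apply Submodule.span_le.mpr
    rintro v ⟨i', hi', l, hl, rfl⟩
    exact LinearMap.mem_ker.mpr (hRELT i' (le_trans hi' hi) l hl)
  have hUmono : ∀ i i' : ℕ, i ≤ i' → U i ≤ U i' := by
    intro i i' h
    apply Submodule.span_mono
    rintro v ⟨a, ha, l, hl, rfl⟩
    exact ⟨a, le_trans ha h, l, hl, rfl⟩
  have hBmono : ∀ l l' : ℕ, l ≤ l' → B l ≤ B l' := by
    intro l l' h
    apply Submodule.span_mono
    rintro v ⟨a, ha, rfl⟩
    exact ⟨a, le_trans ha h, rfl⟩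
  have hBU0 : ∀ l ≤ r, B l ≤ U 0 := by
    intro l hl
    apply Submodule.span_le.mpr
    rintro v ⟨l', hl', rfl⟩
    apply Submodule.subset_span
    exact ⟨0, le_rfl, l', le_trans hl' hl, by rw [show b + 0 * t₁ + l' * t₂ = b + l' * t₂ by ring]⟩
  -- Φ-closure (shift by t₁)
  have hΦU : ∀ i : ℕ, ∀ v ∈ U i, (fun j => (θ ^ t₁) (v j)) ∈ U (i + 1) := by
    intro i
    refine span_closure (θ ^ t₁) _ ?_ ?_ _ _ ?_
    · intro x y; funext j; simp
    · intro a x; funext j; simp [smul_eq_mul]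
    · rintro x ⟨i', hi', l, hl, rfl⟩
      rw [hρshift]
      apply Submodule.subset_span
      exact ⟨i' + 1, by omega, l, hl, by rw [show b + (i' + 1) * t₁ + l * t₂ = b + i' * t₁ + l * t₂ + t₁ by ring]⟩
  -- escape A : stabilization of the t₁-chain is absurd
  have hescA : ∀ i ≤ δ - 2, (∀ v ∈ U i, (fun j => (θ ^ t₁) (v j)) ∈ U i) → False := by
    intro i hi hclosed
    have hmem : ∀ m : ℕ, ρ (b + m * t₁) ∈ U i := by
      intro m
      induction m with
      | zero =>
        apply Submodule.subset_span
        exact ⟨0, Nat.zero_le _, 0, Nat.zero_le _, by rw [show b + 0 * t₁ + 0 * t₂ = b + 0 * t₁ by ring]⟩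
      | succ m ihm =>
        have h1 := hclosed _ ihm
        rw [hρshift] at h1
        rw [show b + (m + 1) * t₁ = b + m * t₁ + t₁ by ring]
        exact h1
    apply hMOORE
    intro k
    obtain ⟨m, hm⟩ := cover_one n t₁ hn1 ht₁ b k
    rw [hρcongr k (b + m * t₁) hm.symm]
    exact LinearMap.mem_ker.mp (hUker i hi (hmem m))
  -- escape B : stabilization of the t₂-chain is absurd
  have hescB : (∀ m : ℕ, ρ (b + m * t₂) ∈ U 0) → False := by
    intro h0
    have hprop : ∀ i : ℕ, ∀ m : ℕ, ρ (b + i * t₁ + m * t₂) ∈ U i := by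
      intro i
      induction i with
      | zero =>
        intro m
        rw [show b + 0 * t₁ + m * t₂ = b + m * t₂ by ring]
        exact h0 m
      | succ i ihm =>
        intro m
        have h1 := hΦU i _ (ihm m)
        rw [hρshift] at h1
        rw [show b + (i + 1) * t₁ + m * t₂ = b + i * t₁ + m * t₂ + t₁ by ring]
        exact h1
    apply hMOORE
    intro k
    obtain ⟨i, hie, m, hm⟩ := cover_two n t₁ t₂ hn1 ht₁ b k
    have hiδ : i ≤ δ - 2 := by omega
    rw [hρcongr k (b + i * t₁ + m * t₂) hm.symm]
    exact LinearMap.mem_ker.mp (hUker (δ - 2) le_rfl (hUmono i (δ - 2) hiδ (hprop i m)))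
  -- the B-chain grows
  have hBrank : ∀ l ≤ r, l + 1 ≤ Module.finrank M (B l) := by
    intro l hl
    induction l with
    | zero =>
      have hne : ρ b ∈ B 0 := Submodule.subset_span
        ⟨0, le_rfl, by rw [show b + 0 * t₂ = b by ring]⟩
      have hρb : ρ b ≠ 0 := by
        intro hz
        have h1 := congrFun hz ⟨j0, hj0P⟩
        simp only [Pi.zero_apply] at h1
        have : α = 0 := by
          have h2 : (θ ^ (b + ((j0 : Fin n) : ℕ))) α = 0 := h1
          exact (map_eq_zero (θ ^ (b + ((j0 : Fin n) : ℕ)))).mp h2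
        exact hα0 this
      by_contra hlt
      have h0 : Module.finrank M (B 0) = 0 := by omega
      have hbot := Submodule.finrank_eq_zero.mp h0
      rw [hbot] at hne
      exact hρb (Submodule.mem_bot M |>.mp hne)
    | succ l ihl =>
      have hlr : l ≤ r := by omega
      have ihv := ihl hlr
      by_cases hmem : ρ (b + (l + 1) * t₂) ∈ B l
      · exfalso
        have hclosed : ∀ v ∈ B l, (fun j => (θ ^ t₂) (v j)) ∈ B l := by
          refine span_closure (θ ^ t₂) _ ?_ ?_ _ _ ?_
          · intro x y; funext j; simp
          · intro a x; funext j; simp [smul_eq_mul]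
          · rintro x ⟨l', hl', rfl⟩
            rw [hρshift]
            rcases Nat.lt_or_ge l' l with h | h
            · apply Submodule.subset_span
              exact ⟨l' + 1, by omega, by rw [show b + (l' + 1) * t₂ = b + l' * t₂ + t₂ by ring]⟩
            · have hll : l' = l := by omega
              rw [hll, show b + l * t₂ + t₂ = b + (l + 1) * t₂ by ring]
              exact hmem
        have hall : ∀ m : ℕ, ρ (b + m * t₂) ∈ B l := by
          intro m
          induction m with
          | zero =>
            apply Submodule.subset_span
            exact ⟨0, Nat.zero_le _, by rw [show b + 0 * t₂ = b + 0 * t₂ by ring]⟩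
          | succ m ihm =>
            have h1 := hclosed _ ihm
            rw [hρshift] at h1
            rw [show b + (m + 1) * t₂ = b + m * t₂ + t₂ by ring]
            exact h1
        exact hescB (fun m => hBU0 l hlr (hall m))
      · have hlt : B l < B (l + 1) := by
          refine lt_of_le_of_ne (hBmono l (l + 1) (by omega)) (fun heq => hmem ?_)
          rw [heq]
          exact Submodule.subset_span ⟨l + 1, le_rfl, rfl⟩
        have := Submodule.finrank_lt_finrank_of_lt hlt
        omega
  -- the U-chain grows
  have hUrank : ∀ i ≤ δ - 2, r + 1 + i ≤ Module.finrank M (U i) := by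
    intro i hi
    induction i with
    | zero =>
      have h1 := Submodule.finrank_mono (hBU0 r le_rfl)
      have h2 := hBrank r le_rfl
      omega
    | succ i ihi =>
      have hi' : i ≤ δ - 2 := by omega
      have ihv := ihi hi'
      by_cases hle : U (i + 1) ≤ U i
      · exact absurd (hescA i hi' (fun v hv => hle (hΦU i v hv))) (fun h => h)
      · have hlt : U i < U (i + 1) := lt_of_le_not_ge (hUmono i (i + 1) (by omega)) hle
        have := Submodule.finrank_lt_finrank_of_lt hlt
        omega
  -- rank of the kernel
  have hrk : Module.finrank M (LinearMap.ker f) + 1 = P.card := by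
    have hsurj : LinearMap.range f = ⊤ := by
      rw [LinearMap.range_eq_top]
      intro a
      refine ⟨fun j => if j = (⟨j0, hj0P⟩ : P) then (c j0)⁻¹ * a else 0, ?_⟩
      rw [hfapp]
      have hterm : ∀ j : P, c j * (if j = (⟨j0, hj0P⟩ : P) then (c j0)⁻¹ * a else 0)
          = if j = (⟨j0, hj0P⟩ : P) then c j0 * ((c j0)⁻¹ * a) else 0 := by
        intro j
        split
        · rename_i h; rw [h]
        · rw [mul_zero]
      rw [Finset.sum_congr rfl (fun j _ => hterm j), Finset.sum_ite_eq' Finset.univ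
        (⟨j0, hj0P⟩ : P) (fun _ => c j0 * ((c j0)⁻¹ * a))]
      simp [hj0']
    have hrn := LinearMap.finrank_range_add_finrank_ker f
    rw [hsurj, finrank_top] at hrn
    rw [Module.finrank_fintype_fun_eq_card, Fintype.card_coe, Module.finrank_self] at hrn
    omega
  -- conclusion
  have h1 := hUrank (δ - 2) le_rfl
  have h2 := Submodule.finrank_mono (hUker (δ - 2) le_rfl)
  have h4 := le_trans h1 h2
  rw [hwt]
  calc δ + r = r + 1 + (δ - 2) + 1 := by omega
    _ ≤ Module.finrank M (LinearMap.ker f) + 1 := Nat.add_le_add_right h4 1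
    _ = P.card := hrk
end

section
/- Let b, δ, r, t_1, t_2 be integers with b ≥ 0, δ ≥ 2, r ≥ 0, δ + r − 1 ≤ n, gcd(n, t_1) = 1 and gcd(n, t_2) < δ. If c = (c_0, …, c_{n−1}) ∈ M^n is nonzero and satisfies Σ_{j=0}^{n−1} c_j · θ^{b + i·t_1 + ℓ·t_2 + j}(α) = 0 for all 0 ≤ i ≤ δ−2 and all 0 ≤ ℓ ≤ r, then the Hamming weight of c is at least δ + r. -/
/-! Skew polynomials over a field `M` twisted by a ring automorphism `θ` (`x·a = θ(a)·x`),
modeled as finitely supported functions `ℕ →₀ M` (coefficient of `xⁱ` at `i`),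
with left-coefficient multiplication `(Σᵢ aᵢ xⁱ)·(Σⱼ bⱼ xʲ) = Σᵢⱼ aᵢ θⁱ(bⱼ) x^{i+j}`. -/

variable {M : Type*} [Field M]

/-! ### Auxiliary lemmas for the proof -/

private lemma powSuccApply (φ : M ≃+* M) (i : ℕ) (x : M) : (φ ^ (i+1)) x = φ ((φ ^ i) x) := by
  rw [pow_succ']; rfl

private lemma powAddApply (φ : M ≃+* M) (u v : ℕ) (x : M) :
    (φ ^ (u + v)) x = (φ ^ u) ((φ ^ v) x) := by
  rw [pow_add]; rfl

private lemma mooreL (K : Subfield M) (φ : M ≃+* M) (hfix : ∀ x : M, φ x = x → x ∈ K)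
    {ι : Type*} {γ : ι → M} (hγ : LinearIndependent K γ) :
    ∀ s : Finset ι, ∀ d : ι → M,
      (∀ i < s.card, ∑ k ∈ s, d k * (φ ^ i) (γ k) = 0) → ∀ k ∈ s, d k = 0 := by
  classical
  intro s
  induction s using Finset.strongInduction with
  | _ s IH =>
    intro d hrows
    by_contra hcon
    push_neg at hcon
    obtain ⟨k₀, hk₀s, hk₀⟩ := hcon
    have hcardpos : 0 < s.card := Finset.card_pos.mpr ⟨k₀, hk₀s⟩
    set d' : ι → M := fun k => d k * (d k₀)⁻¹ with hd'
    have hrows' : ∀ i < s.card, ∑ k ∈ s, d' k * (φ ^ i) (γ k) = 0 := by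
      intro i hi
      have h := hrows i hi
      have : ∑ k ∈ s, d' k * (φ ^ i) (γ k)
          = (∑ k ∈ s, d k * (φ ^ i) (γ k)) * (d k₀)⁻¹ := by
        rw [Finset.sum_mul]; exact Finset.sum_congr rfl fun k _ => by rw [hd']; ring
      rw [this, h, zero_mul]
    have hd'k₀ : d' k₀ = 1 := mul_inv_cancel₀ hk₀
    set e : ι → M := fun k => φ.symm (φ (d' k) - d' k) with he
    have hek₀ : e k₀ = 0 := by simp [he, hd'k₀]
    have herows : ∀ i < (s.erase k₀).card, ∑ k ∈ s.erase k₀, e k * (φ ^ i) (γ k) = 0 := by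
      intro i hi
      rw [Finset.card_erase_of_mem hk₀s] at hi
      have hi1 : i + 1 < s.card := by omega
      have hi0 : i < s.card := by omega
      have hsum : ∑ k ∈ s.erase k₀, e k * (φ ^ i) (γ k) = ∑ k ∈ s, e k * (φ ^ i) (γ k) :=
        Finset.sum_erase _ (by rw [hek₀, zero_mul])
      rw [hsum]
      have h1 : ∑ k ∈ s, e k * (φ ^ i) (γ k)
          = φ.symm (∑ k ∈ s, (φ (d' k) - d' k) * (φ ^ (i+1)) (γ k)) := by
        rw [map_sum]
        refine Finset.sum_congr rfl fun k _ => ?_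
        rw [map_mul, he]
        congr 1
        rw [powSuccApply]
        exact (φ.symm_apply_apply _).symm
      have ha : ∑ k ∈ s, φ (d' k) * (φ ^ (i+1)) (γ k)
          = φ (∑ k ∈ s, d' k * (φ ^ i) (γ k)) := by
        rw [map_sum]
        refine Finset.sum_congr rfl fun k _ => ?_
        rw [powSuccApply]
        exact (map_mul φ _ _).symm
      have h2 : ∑ k ∈ s, (φ (d' k) - d' k) * (φ ^ (i+1)) (γ k) = 0 := by
        have : ∑ k ∈ s, (φ (d' k) - d' k) * (φ ^ (i+1)) (γ k)
            = (∑ k ∈ s, φ (d' k) * (φ ^ (i+1)) (γ k))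
              - ∑ k ∈ s, d' k * (φ ^ (i+1)) (γ k) := by
          rw [← Finset.sum_sub_distrib]
          exact Finset.sum_congr rfl fun k _ => by ring
        rw [this, ha, hrows' i hi0, hrows' (i+1) hi1, map_zero, sub_zero]
      rw [h1, h2, map_zero]
    have hee : ∀ k ∈ s, e k = 0 := by
      intro k hk
      by_cases hkk : k = k₀
      · rw [hkk]; exact hek₀
      · exact IH (s.erase k₀) (Finset.erase_ssubset hk₀s) e herows k
          (Finset.mem_erase.mpr ⟨hkk, hk⟩)
    have hfixd : ∀ k ∈ s, φ (d' k) = d' k := by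
      intro k hk
      have h := hee k hk
      rw [he] at h
      have h0 : φ (d' k) - d' k = 0 := by
        have := congrArg φ h
        rwa [φ.apply_symm_apply, map_zero] at this
      exact sub_eq_zero.mp h0
    set g : ι → K := fun k => if hk : k ∈ s then ⟨d' k, hfix _ (hfixd k hk)⟩ else 0 with hg
    have hgsum : ∑ k ∈ s, g k • γ k = 0 := by
      have hrow0 := hrows' 0 hcardpos
      rw [← hrow0]
      refine Finset.sum_congr rfl fun k hk => ?_
      rw [hg]
      simp only [dif_pos hk]
      rw [Submonoid.smul_def]
      rfl
    have := linearIndependent_iff'.mp hγ s g hgsum k₀ hk₀s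
    rw [hg] at this
    simp only [dif_pos hk₀s] at this
    have : d' k₀ = 0 := congrArg Subtype.val this
    rw [hd'k₀] at this
    exact one_ne_zero this

private lemma fixPowApply (φ : M ≃+* M) (x : M) (h : φ x = x) (k : ℕ) : (φ ^ k) x = x := by
  induction k with
  | zero => rfl
  | succ k ih => rw [powSuccApply, ih, h]



private lemma span_top_of_ann {ι : Type*} [Fintype ι] [DecidableEq ι] (S : Set (ι → M))
    (h : ∀ d : ι → M, (∀ x ∈ S, ∑ k, d k * x k = 0) → d = 0) :
    Submodule.span M S = ⊤ := by
  rw [← Subspace.dualAnnihilator_inj (W := Submodule.span M S) (W' := ⊤),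
    Submodule.dualAnnihilator_top, eq_bot_iff]
  intro f hf
  rw [Submodule.mem_dualAnnihilator] at hf
  have hS : ∀ x ∈ S, f x = 0 := fun x hx => hf x (Submodule.subset_span hx)
  have hfd : ∀ x : ι → M, f x = ∑ k, x k * f (fun j => if k = j then 1 else 0) := by
    intro x
    conv_lhs => rw [pi_eq_sum_univ x, map_sum]
    refine Finset.sum_congr rfl fun k _ => ?_
    rw [map_smul, smul_eq_mul]
  have hd : (fun k => f (fun j => if k = j then 1 else 0)) = 0 := by
    apply h
    intro x hx
    calc ∑ k, (fun k => f (fun j => if k = j then 1 else 0)) k * x k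
        = ∑ k, x k * f (fun j => if k = j then 1 else 0) :=
          Finset.sum_congr rfl fun k _ => (mul_comm _ _)
      _ = f x := (hfd x).symm
      _ = 0 := hS x hx
  rw [Submodule.mem_bot]
  refine LinearMap.ext fun y => ?_
  rw [hfd y]
  simp [congrFun hd]

private lemma cover_lemma (n t₁ t₂ b δ u : ℕ) (hn : 0 < n) (hδ : 2 ≤ δ)
    (ht₁ : Nat.gcd n t₁ = 1) (ht₂ : Nat.gcd n t₂ < δ) :
    ∃ i ≤ δ - 2, ∃ l' : ℕ, b + i * t₁ + l' * t₂ ≡ u [MOD n] := by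
  set g := Nat.gcd n t₂ with hgdef
  have hg : 0 < g := Nat.gcd_pos_of_pos_left _ hn
  have hcop : Nat.Coprime t₁ g := Nat.Coprime.coprime_dvd_right (Nat.gcd_dvd_left n t₂)
    (Nat.coprime_comm.mp ht₁)
  have ha : ∃ a : ℕ, t₁ * a ≡ 1 [MOD g] := by
    rcases Nat.lt_or_ge g 2 with hg1 | hg2
    · exact ⟨1, by have : g = 1 := by omega
                   rw [this]; exact Nat.modEq_one⟩
    · obtain ⟨a, -, ha⟩ := Nat.exists_mul_mod_eq_one_of_coprime hcop hg2
      exact ⟨a, by unfold Nat.ModEq; rw [ha, Nat.one_mod_eq_one.mpr (by omega)]⟩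
  obtain ⟨a, ha⟩ := ha
  set z : ℤ := (u : ℤ) - b with hz
  set i0 : ℤ := (a * z) % g with hi0
  have hgZ : (0:ℤ) < g := by exact_mod_cast hg
  have hi0nn : 0 ≤ i0 := Int.emod_nonneg _ (by positivity)
  have hi0lt : i0 < g := Int.emod_lt_of_pos _ hgZ
  set i : ℕ := i0.toNat with hi
  have hicast : (i : ℤ) = i0 := Int.toNat_of_nonneg hi0nn
  have hile : i ≤ δ - 2 := by
    have h1 : (i:ℤ) < g := by rw [hicast]; exact hi0lt
    have : i < g := by exact_mod_cast h1
    omega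
  -- (g:ℤ) ∣ z - i*t₁
  have h1 : (g:ℤ) ∣ (t₁:ℤ) * a - 1 := by
    have h := (Nat.modEq_iff_dvd (n := g)).mp ha.symm
    push_cast at h
    exact h
  have h2 : (g:ℤ) ∣ (a:ℤ) * z - i := by
    rw [hicast, hi0]
    exact Int.dvd_self_sub_of_emod_eq rfl
  have h3 : (g:ℤ) ∣ z - i * t₁ := by
    have heq : z - (i:ℤ) * t₁ = z * (1 - t₁ * a) + t₁ * ((a:ℤ) * z - i) := by ring
    rw [heq]
    exact dvd_add (Dvd.dvd.mul_left (dvd_sub_comm.mp h1) z) (Dvd.dvd.mul_left h2 t₁)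
  obtain ⟨m, hm⟩ := h3
  have hbez : (g : ℤ) = n * Nat.gcdA n t₂ + t₂ * Nat.gcdB n t₂ := Nat.gcd_eq_gcd_ab n t₂
  set l0 : ℤ := (m * Nat.gcdB n t₂) % n with hl0
  have hnZ : (0:ℤ) < n := by exact_mod_cast hn
  have hl0nn : 0 ≤ l0 := Int.emod_nonneg _ (by positivity)
  set l' : ℕ := l0.toNat with hl'
  have hl'cast : (l' : ℤ) = l0 := Int.toNat_of_nonneg hl0nn
  have h4 : (n:ℤ) ∣ m * Nat.gcdB n t₂ - l' := by
    rw [hl'cast, hl0]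
    exact Int.dvd_self_sub_of_emod_eq rfl
  have h5 : (n:ℤ) ∣ z - i * t₁ - l' * t₂ := by
    have heq : z - (i:ℤ) * t₁ - l' * t₂
        = n * (m * Nat.gcdA n t₂) + t₂ * (m * Nat.gcdB n t₂ - l') := by
      rw [hm, hbez]; ring
    rw [heq]
    exact dvd_add (Dvd.intro _ rfl) (Dvd.dvd.mul_left h4 t₂)
  refine ⟨i, hile, l', ?_⟩
  rw [Nat.modEq_iff_dvd]
  convert h5 using 1
  push_cast
  rw [hz]
  ring

/-- **parity-check form of the Hartmann–Tzeng bound.**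
Let `θ` be an automorphism of `M` of finite order `n` and `α ∈ M` generate a normal basis of
`M` over `K = M^θ`. Let `b ≥ 0`, `δ ≥ 2`, `r ≥ 0`, `t₁, t₂` with `δ + r - 1 ≤ n`,
`gcd(n, t₁) = 1` and `gcd(n, t₂) < δ`. If `c ∈ Mⁿ` is nonzero and
`Σ_j c_j · θ^{b + i·t₁ + ℓ·t₂ + j}(α) = 0` for all `0 ≤ i ≤ δ-2` and `0 ≤ ℓ ≤ r`,
then the Hamming weight of `c` is at least `δ + r`. -/
theorem hartmann_tzeng_parity_check {M : Type*} [Field M] (θ : M ≃+* M) (n : ℕ)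
    (hord : orderOf θ = n) (α : M) (hα : NormalBasis θ n α)
    (b δ r t₁ t₂ : ℕ) (hδ : 2 ≤ δ) (hδr : δ + r ≤ n + 1)
    (ht₁ : Nat.gcd n t₁ = 1) (ht₂ : Nat.gcd n t₂ < δ)
    (c : Fin n → M) (hc0 : c ≠ 0)
    (hsyn : ∀ i ≤ δ - 2, ∀ l ≤ r,
      ∑ j : Fin n, c j * (θ ^ (b + i * t₁ + l * t₂ + (j : ℕ))) α = 0) :
    δ + r ≤ hWt c := by
  classical
  by_contra hlt
  push_neg at hlt
  rcases Nat.eq_zero_or_pos n with hn0 | hn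
  · subst hn0; exact hc0 (funext fun j => j.elim0)
  set K := fixedSubfield θ with hK
  have hKfix : ∀ x : M, θ x = x → x ∈ K := fun x h => h
  set J : Finset (Fin n) := Finset.univ.filter (fun j => c j ≠ 0) with hJ
  have hmemJ : ∀ j, j ∈ J ↔ c j ≠ 0 := by intro j; simp [hJ]
  have hwt : hWt c = J.card := by
    have hset : {j : Fin n | c j ≠ 0} = ↑J := by ext j; simp [hJ]
    show Set.ncard {j : Fin n | c j ≠ 0} = J.card
    rw [hset, Set.ncard_coe_finset]
  obtain ⟨j₀, hj₀⟩ : ∃ j, c j ≠ 0 := by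
    by_contra h; push_neg at h; exact hc0 (funext h)
  have hj₀J : j₀ ∈ J := (hmemJ j₀).mpr hj₀
  have hpoweq : ∀ u u' : ℕ, u ≡ u' [MOD n] → (θ : M ≃+* M) ^ u = θ ^ u' := by
    intro u u' h
    rw [pow_eq_pow_iff_modEq, hord]; exact h
  have hind : ∀ b' : ℕ, LinearIndependent K (fun j : Fin n => (θ ^ (b' + (j:ℕ))) α) := by
    intro b'
    have hemb : ∀ j : Fin n, (b' + (j:ℕ)) % n < n := fun j => Nat.mod_lt _ hn
    set emb : Fin n → Fin n := fun j => ⟨(b' + (j:ℕ)) % n, hemb j⟩ with he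
    have hinj : Function.Injective emb := by
      intro j₁ j₂ h
      have h' : (b' + (j₁:ℕ)) % n = (b' + (j₂:ℕ)) % n := congrArg Fin.val h
      have h2 : (j₁:ℕ) % n = (j₂:ℕ) % n := Nat.ModEq.add_left_cancel' b' h'
      rw [Nat.mod_eq_of_lt j₁.isLt, Nat.mod_eq_of_lt j₂.isLt] at h2
      exact Fin.ext h2
    have hfe : (fun j : Fin n => (θ ^ (b' + (j:ℕ))) α)
        = (fun i : Fin n => (θ ^ (i : ℕ)) α) ∘ emb := by
      funext j
      show (θ ^ (b' + (j:ℕ))) α = (θ ^ ((b' + (j:ℕ)) % n)) α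
      rw [hpoweq _ _ (Nat.mod_modEq _ n).symm]
    rw [hfe]
    exact LinearIndependent.comp hα.1 emb hinj
  have hfixt₁ : ∀ x : M, (θ ^ t₁) x = x → x ∈ K := by
    obtain ⟨a, ha⟩ : ∃ a : ℕ, t₁ * a ≡ 1 [MOD n] := by
      rcases Nat.lt_or_ge n 2 with h1 | h2
      · refine ⟨1, ?_⟩
        have hn1 : n = 1 := by omega
        rw [hn1]; exact Nat.modEq_one
      · obtain ⟨a, -, ha⟩ := Nat.exists_mul_mod_eq_one_of_coprime (Nat.coprime_comm.mp ht₁) h2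
        exact ⟨a, by unfold Nat.ModEq; rw [ha, Nat.one_mod_eq_one.mpr (by omega)]⟩
    intro x hx
    have h2 : (θ ^ (t₁ * a)) x = x := by rw [pow_mul]; exact fixPowApply _ x hx a
    have h3 : (θ : M ≃+* M) ^ (t₁ * a) = θ ^ 1 := hpoweq _ _ ha
    apply hKfix
    rw [h3] at h2
    simpa using h2
  set v : ℕ → (↥J → M) := fun u j => (θ ^ (u + (j.1:ℕ))) α with hv
  set Pl : (↥J → M) →ₗ[M] M :=
    { toFun := fun x => ∑ j : ↥J, c j.1 * x j
      map_add' := by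
        intro x y
        rw [← Finset.sum_add_distrib]
        exact Finset.sum_congr rfl fun j _ => by simp [mul_add]
      map_smul' := by
        intro m x
        simp only [Pi.smul_apply, smul_eq_mul, RingHom.id_apply, Finset.mul_sum]
        exact Finset.sum_congr rfl fun j _ => by ring } with hPldef
  have hPlv : ∀ u : ℕ, Pl (v u) = ∑ j ∈ J, c j * (θ ^ (u + (j:ℕ))) α := by
    intro u
    rw [← Finset.sum_coe_sort J (fun j => c j * (θ ^ (u + (j:ℕ))) α)]
    rfl
  have hSzero : ∀ i ≤ δ - 2, ∀ l ≤ r, Pl (v (b + i * t₁ + l * t₂)) = 0 := by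
    intro i hi l hl
    rw [hPlv]
    have h := hsyn i hi l hl
    rw [← h]
    exact Finset.sum_subset (Finset.subset_univ J) (fun x _ hx => by
      have hcx : c x = 0 := by by_contra hcx; exact hx ((hmemJ x).mpr hcx)
      rw [hcx, zero_mul])
  set W : ℕ → Submodule M (↥J → M) :=
    fun l => Submodule.span M {x | ∃ i ≤ δ - 2, ∃ l' ≤ l, x = v (b + i * t₁ + l' * t₂)} with hW
  have hWle : ∀ l, W l ≤ W (l + 1) := by
    intro l
    refine Submodule.span_mono ?_
    rintro x ⟨i, hi, l', hl', hx⟩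
    exact ⟨i, hi, l', by omega, hx⟩
  have hWker : ∀ l ≤ r, W l ≤ LinearMap.ker Pl := by
    intro l hl
    refine Submodule.span_le.mpr ?_
    rintro x ⟨i, hi, l', hl', rfl⟩
    exact LinearMap.mem_ker.mpr (hSzero i hi l' (le_trans hl' hl))
  have hvcong : ∀ u u' : ℕ, u ≡ u' [MOD n] → v u = v u' := by
    intro u u' h
    funext j
    show (θ ^ (u + (j.1:ℕ))) α = (θ ^ (u' + (j.1:ℕ))) α
    rw [hpoweq _ _ (Nat.ModEq.add_right _ h)]
  have hshift : ∀ i l', (fun j : ↥J => (θ ^ t₂) (v (b + i * t₁ + l' * t₂) j))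
      = v (b + i * t₁ + (l' + 1) * t₂) := by
    intro i l'
    funext j
    show (θ ^ t₂) ((θ ^ (b + i * t₁ + l' * t₂ + (j.1:ℕ))) α) = (θ ^ (b + i * t₁ + (l'+1) * t₂ + (j.1:ℕ))) α
    rw [← powAddApply]
    exact congrArg (fun e => (θ ^ e) α) (by ring)
  by_cases hstab : ∃ l, l < r ∧ W (l + 1) ≤ W l
  · obtain ⟨l, hlr, hWst⟩ := hstab
    have hT : ∀ x ∈ W l, (fun j => (θ ^ t₂) (x j)) ∈ W l := by
      intro x hx
      simp only [hW] at hx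
      induction hx using Submodule.span_induction with
      | mem x hxmem =>
        obtain ⟨i, hi, l', hl', rfl⟩ := hxmem
        rw [hshift i l']
        exact hWst (Submodule.subset_span ⟨i, hi, l' + 1, by omega, rfl⟩)
      | zero =>
        have h0 : (fun j : ↥J => (θ ^ t₂) ((0 : ↥J → M) j)) = 0 := by funext j; simp
        rw [h0]; exact Submodule.zero_mem _
      | add x y hx hy ihx ihy =>
        have hxy : (fun j => (θ ^ t₂) ((x + y) j))
            = (fun j => (θ ^ t₂) (x j)) + fun j => (θ ^ t₂) (y j) := by
          funext j; simp
        rw [hxy]; exact Submodule.add_mem _ ihx ihy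
      | smul m x hx ihx =>
        have hmx : (fun j => (θ ^ t₂) ((m • x) j)) = ((θ ^ t₂) m) • fun j => (θ ^ t₂) (x j) := by
          funext j; simp [smul_eq_mul]
        rw [hmx]; exact Submodule.smul_mem _ _ ihx
    have hvWl : ∀ (l' : ℕ) (i : ℕ), i ≤ δ - 2 → v (b + i * t₁ + l' * t₂) ∈ W l := by
      intro l'
      induction l' with
      | zero => intro i hi; exact Submodule.subset_span ⟨i, hi, 0, Nat.zero_le _, rfl⟩
      | succ l'' ih =>
        intro i hi
        have h := hT _ (ih i hi)
        rwa [hshift i l''] at h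
    have hvall : ∀ u : ℕ, Pl (v u) = 0 := by
      intro u
      obtain ⟨i, hi, l', hml⟩ := cover_lemma n t₁ t₂ b δ u hn hδ ht₁ ht₂
      rw [hvcong u _ hml.symm]
      exact LinearMap.mem_ker.mp (hWker l (le_of_lt hlr) (hvWl l' i hi))
    have hrows : ∀ i < J.card,
        ∑ k ∈ J, c k * ((θ : M ≃+* M) ^ i) ((fun j : Fin n => (θ ^ (0 + (j:ℕ))) α) k) = 0 := by
      intro i _
      have h := hvall i
      rw [hPlv] at h
      rw [← h]
      refine Finset.sum_congr rfl fun k _ => ?_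
      congr 1
      calc ((θ : M ≃+* M) ^ i) ((θ ^ (0 + (k:ℕ))) α)
          = (θ ^ (i + (0 + (k:ℕ)))) α := (powAddApply θ i _ α).symm
        _ = (θ ^ (i + (k:ℕ))) α := congrArg (fun e => (θ ^ e) α) (by ring)
    exact hj₀ (mooreL K θ hKfix (hind 0) J c hrows j₀ hj₀J)
  · push_neg at hstab
    by_cases hwle : J.card ≤ δ - 1
    · have hrows : ∀ i < J.card,
          ∑ k ∈ J, c k * ((θ ^ t₁ : M ≃+* M) ^ i) ((fun j : Fin n => (θ ^ (b + (j:ℕ))) α) k) = 0 := by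
        intro i hi
        have hi2 : i ≤ δ - 2 := by omega
        have h := hSzero i hi2 0 (Nat.zero_le r)
        rw [hPlv] at h
        rw [← h]
        refine Finset.sum_congr rfl fun k _ => ?_
        congr 1
        calc ((θ ^ t₁ : M ≃+* M) ^ i) ((θ ^ (b + (k:ℕ))) α)
            = (θ ^ (t₁ * i)) ((θ ^ (b + (k:ℕ))) α) := by rw [← pow_mul]
          _ = (θ ^ (t₁ * i + (b + (k:ℕ)))) α := (powAddApply θ _ _ α).symm
          _ = (θ ^ (b + i * t₁ + 0 * t₂ + (k:ℕ))) α := congrArg (fun e => (θ ^ e) α) (by ring)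
      exact hj₀ (mooreL K (θ ^ t₁) hfixt₁ (hind b) J c hrows j₀ hj₀J)
    · have hwgt : δ - 1 < J.card := by omega
      obtain ⟨J', hJ'sub, hJ'card⟩ := Finset.exists_subset_card_eq (le_of_lt hwgt)
      set ρ : (↥J → M) →ₗ[M] (↥J' → M) :=
        LinearMap.funLeft M M (fun j : ↥J' => (⟨j.1, hJ'sub j.2⟩ : ↥J)) with hρ
      have hmap : Submodule.map ρ (W 0) = ⊤ := by
        show Submodule.map ρ (Submodule.span M
          {x | ∃ i ≤ δ - 2, ∃ l' ≤ (0:ℕ), x = v (b + i * t₁ + l' * t₂)}) = ⊤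
        rw [Submodule.map_span]
        apply span_top_of_ann
        intro d hd
        set dt : Fin n → M := fun k => if hk : k ∈ J' then d ⟨k, hk⟩ else 0 with hdt
        have hrows : ∀ i < J'.card,
            ∑ k ∈ J', dt k * ((θ ^ t₁ : M ≃+* M) ^ i) ((fun j : Fin n => (θ ^ (b + (j:ℕ))) α) k) = 0 := by
          intro i hi
          have hi2 : i ≤ δ - 2 := by omega
          have hx : ρ (v (b + i * t₁ + 0 * t₂)) ∈ ρ ''
              {x | ∃ i ≤ δ - 2, ∃ l' ≤ (0:ℕ), x = v (b + i * t₁ + l' * t₂)} :=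
            ⟨_, ⟨i, hi2, 0, le_refl 0, rfl⟩, rfl⟩
          have h : ∑ k : ↥J', d k * (θ ^ (b + i * t₁ + 0 * t₂ + (k.1:ℕ))) α = 0 := hd _ hx
          rw [← Finset.sum_coe_sort J'
            (fun k => dt k * ((θ ^ t₁ : M ≃+* M) ^ i) ((θ ^ (b + (k:ℕ))) α))]
          rw [← h]
          refine Finset.sum_congr rfl fun k _ => ?_
          have hdk : dt k.1 = d k := by
            show (if hk : (k:Fin n) ∈ J' then d ⟨k, hk⟩ else 0) = d k
            rw [dif_pos k.2]
          rw [hdk]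
          congr 1
          calc ((θ ^ t₁ : M ≃+* M) ^ i) ((θ ^ (b + (k.1:ℕ))) α)
              = (θ ^ (t₁ * i)) ((θ ^ (b + (k.1:ℕ))) α) := by rw [← pow_mul]
            _ = (θ ^ (t₁ * i + (b + (k.1:ℕ)))) α := (powAddApply θ _ _ α).symm
            _ = (θ ^ (b + i * t₁ + 0 * t₂ + (k.1:ℕ))) α :=
                congrArg (fun e => (θ ^ e) α) (by ring)
        have hall := mooreL K (θ ^ t₁) hfixt₁ (hind b) J' dt hrows
        funext k
        have hk := hall k.1 k.2
        rw [hdt] at hk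
        simp only [dif_pos k.2] at hk
        exact hk
      have hfr0 : δ - 1 ≤ Module.finrank M ↥(W 0) := by
        have h1 := Submodule.finrank_map_le ρ (W 0)
        rw [hmap, finrank_top, Module.finrank_pi, Fintype.card_coe, hJ'card] at h1
        exact h1
      have hchain : ∀ l ≤ r, Module.finrank M ↥(W 0) + l ≤ Module.finrank M ↥(W l) := by
        intro l
        induction l with
        | zero => intro _; simp
        | succ l ih =>
          intro hl
          have hlt2 : W l < W (l + 1) := lt_of_le_not_ge (hWle l) (hstab l (by omega))
          have h2 := Submodule.finrank_lt_finrank_of_lt hlt2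
          have ihl := ih (by omega)
          omega
      have hup : Module.finrank M ↥(W r) < J.card := by
        have hne : W r ≠ ⊤ := by
          intro htop
          have hmem : (fun j : ↥J => if j = ⟨j₀, hj₀J⟩ then (1:M) else 0) ∈ LinearMap.ker Pl :=
            hWker r le_rfl (htop ▸ Submodule.mem_top)
          have hPlx : Pl (fun j : ↥J => if j = ⟨j₀, hj₀J⟩ then (1:M) else 0) = c j₀ := by
            show ∑ j : ↥J, c j.1 * (if j = (⟨j₀, hj₀J⟩ : ↥J) then (1:M) else 0) = c j₀
            have hterm : ∀ j : ↥J, c j.1 * (if j = (⟨j₀, hj₀J⟩ : ↥J) then (1:M) else 0)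
                = if j = (⟨j₀, hj₀J⟩ : ↥J) then c j.1 else 0 := fun j => by
              split <;> simp
            rw [Finset.sum_congr rfl (fun j _ => hterm j), Finset.sum_ite_eq' Finset.univ]
            simp
          rw [LinearMap.mem_ker, hPlx] at hmem
          exact hj₀ hmem
        have hlt2 : W r < ⊤ := lt_top_iff_ne_top.mpr hne
        have h2 := Submodule.finrank_lt_finrank_of_lt hlt2
        rwa [finrank_top, Module.finrank_pi, Fintype.card_coe] at h2
      have hch := hchain r le_rfl
      rw [hwt] at hlt
      omega
end

section
/- Let g ∈ R be nonzero. If i ∈ T_β(g), i.e., x − θ^i(β) right-divides g in S, then also i + μ (taken modulo n) belongs to T_β(g). Consequently, if T_β(g) is nonempty then it is a union of cosets of the subgroup C_s = {0, μ, 2μ, …, (s−1)μ} of Z/nZ. -/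
/-! Skew polynomials over a field `M` twisted by a ring automorphism `θ` (`x·a = θ(a)·x`),
modeled as finitely supported functions `ℕ →₀ M` (coefficient of `xⁱ` at `i`),
with left-coefficient multiplication `(Σᵢ aᵢ xⁱ)·(Σⱼ bⱼ xʲ) = Σᵢⱼ aᵢ θⁱ(bⱼ) x^{i+j}`. -/

variable {M : Type*} [Field M]

lemma pow_comm_apply' (θ : M ≃+* M) (μ i : ℕ) (b : M) :
    (θ ^ μ) ((θ ^ i) b) = (θ ^ i) ((θ ^ μ) b) := by
  have h : θ ^ μ * θ ^ i = θ ^ i * θ ^ μ := by rw [← pow_add, ← pow_add, Nat.add_comm]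
  have := congrArg (fun e : M ≃+* M => e b) h
  simpa using this

lemma pmap_sMul' (θ : M ≃+* M) (μ : ℕ) (f g : ℕ →₀ M) :
    pmap (θ ^ μ) (sMul θ f g) = sMul θ (pmap (θ ^ μ) f) (pmap (θ ^ μ) g) := by
  set φ := θ ^ μ
  unfold sMul pmap
  rw [Finsupp.sum_mapRange_index (by intro i; simp)]
  rw [show (Finsupp.mapRange ⇑φ (map_zero φ) (f.sum fun i a => g.sum fun j b =>
      Finsupp.single (i + j) (a * (θ ^ i) b))) =
    (Finsupp.mapRange.addMonoidHom φ.toAddMonoidHom) (f.sum fun i a => g.sum fun j b =>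
      Finsupp.single (i + j) (a * (θ ^ i) b)) from rfl]
  rw [map_finsuppSum]
  refine Finsupp.sum_congr (fun i _ => ?_)
  rw [map_finsuppSum, Finsupp.sum_mapRange_index (by intro j; simp)]
  refine Finsupp.sum_congr (fun j _ => ?_)
  show Finsupp.mapRange ⇑φ (map_zero φ) (Finsupp.single (i + j) (f i * (θ ^ i) (g j))) = _
  rw [Finsupp.mapRange_single, map_mul, pow_comm_apply']

lemma pmap_Xsub' (θ : M ≃+* M) (μ : ℕ) (γ : M) :
    pmap (θ ^ μ) (Xsub γ) = Xsub ((θ ^ μ) γ) := by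
  ext k
  simp only [pmap, Finsupp.mapRange_apply, Xsub, Finsupp.sub_apply, map_sub,
    Finsupp.single_apply]
  split_ifs <;> simp

/-- Setting: `θ` of order `n = μ·s`, `L = M^{θ^μ}`, `R = L[x;σ] ⊆ S = M[x;θ]`,
`α` generating a normal basis of `M/K` and `β = α⁻¹θ(α)`. If `g ∈ R` is nonzero and
`i ∈ T_β(g)` (i.e. `x - θⁱ(β)` right-divides `g` in `S`), then `(i + μ) mod n ∈ T_β(g)`;
consequently `T_β(g)` is a union of cosets of the subgroup `C_s = {0, μ, …, (s-1)μ}` of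
`ℤ/nℤ`, i.e. it is stable under adding any multiple of `μ` modulo `n`. -/
theorem defining_set_union_of_cosets {M : Type*} [Field M] (θ : M ≃+* M) (μ s n : ℕ)
    (hμ : 0 < μ) (hs : 0 < s) (hn : n = μ * s) (hord : orderOf θ = n)
    (α : M) (hα : NormalBasis θ n α) (β : M) (hβ : β = α⁻¹ * θ α)
    (g : ℕ →₀ M) (hg0 : g ≠ 0) (hgR : inR (θ ^ μ) g) :
    (∀ i < n, rdvd θ (Xsub ((θ ^ i) β)) g →
      rdvd θ (Xsub ((θ ^ ((i + μ) % n)) β)) g) ∧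
    (∀ i < n, rdvd θ (Xsub ((θ ^ i) β)) g →
      ∀ m : ℕ, rdvd θ (Xsub ((θ ^ ((i + m * μ) % n)) β)) g) := by
  have hn0 : 0 < n := hn ▸ Nat.mul_pos hμ hs
  have hgfix : pmap (θ ^ μ) g = g := by
    ext k; simpa [pmap, Finsupp.mapRange_apply] using hgR k
  have hred : ∀ k : ℕ, (θ ^ k) β = (θ ^ (k % n)) β := by
    intro k
    have h1 : θ ^ (n * (k / n)) = 1 := by
      rw [pow_mul, ← hord, pow_orderOf_eq_one, one_pow]
    have h2 : θ ^ k = θ ^ (k % n) := by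
      conv_lhs => rw [← Nat.div_add_mod k n]
      rw [pow_add, h1, one_mul]
    rw [h2]
  have step : ∀ i : ℕ, rdvd θ (Xsub ((θ ^ i) β)) g →
      rdvd θ (Xsub ((θ ^ (i + μ)) β)) g := by
    rintro i ⟨q, hq⟩
    refine ⟨pmap (θ ^ μ) q, ?_⟩
    have e : (θ ^ (i + μ)) β = (θ ^ μ) ((θ ^ i) β) := by
      rw [Nat.add_comm, pow_add]; rfl
    conv_lhs => rw [← hgfix, hq]
    rw [pmap_sMul', pmap_Xsub', e]
  have step' : ∀ i : ℕ, rdvd θ (Xsub ((θ ^ i) β)) g →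
      rdvd θ (Xsub ((θ ^ ((i + μ) % n)) β)) g := by
    intro i h
    have := step i h
    rwa [hred (i + μ)] at this
  constructor
  · intro i _ h; exact step' i h
  · intro i hi h m
    induction m with
    | zero => simpa [Nat.mod_eq_of_lt hi] using h
    | succ m ih =>
      have := step' _ ih
      have e2 : (((i + m * μ) % n) + μ) % n = (i + (m + 1) * μ) % n := by
        rw [Nat.mod_add_mod]; congr 1; ring
      rwa [e2] at this
end

section
/- Extend π = θ^μ to a ring automorphism of S = M[x;θ] acting coefficientwise, with fixed ring R = L[x;σ]. For every nonzero f ∈ S, let f̄ be the monic generator of the left ideal Sf ∩ R of R. Then: (i) S·f̄ is the largest π-invariant left ideal of S contained in Sf; (ii) S·f̄ = ⋂_{i=0}^{s−1} S·f^{π^i}, where f^{π^i} denotes π^i applied coefficientwise to f; consequently (iii) f̄ = lclm(f, f^π, …, f^{π^{s−1}}). -/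
/-! Skew polynomials over a field `M` twisted by a ring automorphism `θ` (`x·a = θ(a)·x`),
modeled as finitely supported functions `ℕ →₀ M` (coefficient of `xⁱ` at `i`),
with left-coefficient multiplication `(Σᵢ aᵢ xⁱ)·(Σⱼ bⱼ xʲ) = Σᵢⱼ aᵢ θⁱ(bⱼ) x^{i+j}`. -/

variable {M : Type*} [Field M]

/-- A subset of `M[x;θ]` is a left ideal. -/
def IsLeftIdeal (θ : M ≃+* M) (J : Set (ℕ →₀ M)) : Prop :=
  (0 : ℕ →₀ M) ∈ J ∧ (∀ a ∈ J, ∀ b ∈ J, a + b ∈ J) ∧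
    ∀ q : ℕ →₀ M, ∀ h ∈ J, sMul θ q h ∈ J

section Helper
variable {M : Type*} [Field M] (θ : M ≃+* M)


lemma pow_apply_apply (a b : ℕ) (x : M) : (θ^a) ((θ^b) x) = (θ^(a+b)) x := by
  rw [pow_add]; rfl

lemma zero_sMul (f : ℕ →₀ M) : sMul θ 0 f = 0 := by
  simp [sMul]

lemma sMul_zero (q : ℕ →₀ M) : sMul θ q 0 = 0 := by
  simp [sMul]

lemma single_sMul (e : ℕ) (c : M) (f : ℕ →₀ M) :
    sMul θ (Finsupp.single e c) f = f.sum fun j b => Finsupp.single (e + j) (c * (θ ^ e) b) := by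
  unfold sMul
  apply Finsupp.sum_single_index
  simp

lemma single_sMul_apply (e : ℕ) (c : M) (f : ℕ →₀ M) (k : ℕ) :
    sMul θ (Finsupp.single e c) f k = if e ≤ k then c * (θ ^ e) (f (k - e)) else 0 := by
  rw [single_sMul, Finsupp.sum_apply]
  rw [Finsupp.sum]
  simp only [Finsupp.single_apply]
  by_cases hek : e ≤ k
  · have : ∀ j, (e + j = k) = (j = k - e) := by intro j; simp only [eq_iff_iff]; omega
    simp only [this]
    rw [Finset.sum_ite_eq' f.support (k-e) (fun j => c * (θ^e) (f j))]
    split_ifs with h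
    · simp [hek]
    · have : f (k - e) = 0 := Finsupp.notMem_support_iff.mp h
      simp [this, hek]
  · rw [if_neg hek]
    apply Finset.sum_eq_zero
    intro j _
    rw [if_neg (by omega)]

lemma sMul_coeff' (q f : ℕ →₀ M) (k : ℕ) (s : Finset ℕ) (hs : q.support ⊆ s) :
    sMul θ q f k = ∑ i ∈ s, if i ≤ k then q i * (θ ^ i) (f (k - i)) else 0 := by
  have h1 : sMul θ q f = q.sum fun i a => sMul θ (Finsupp.single i a) f := by
    unfold sMul
    apply Finsupp.sum_congr
    intro i _
    exact (single_sMul θ i (q i) f).symm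
  rw [h1, Finsupp.sum_apply, Finsupp.sum]
  rw [Finset.sum_subset hs]
  · apply Finset.sum_congr rfl
    intro i _
    rw [single_sMul_apply]
  · intro i _ hi
    have : q i = 0 := Finsupp.notMem_support_iff.mp hi
    rw [single_sMul_apply, this]
    simp

lemma sMul_coeff (q f : ℕ →₀ M) (k : ℕ) :
    sMul θ q f k = ∑ i ∈ q.support, if i ≤ k then q i * (θ ^ i) (f (k - i)) else 0 :=
  sMul_coeff' θ q f k q.support le_rfl

lemma sMul_add (q f g : ℕ →₀ M) : sMul θ q (f + g) = sMul θ q f + sMul θ q g := by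
  ext k
  simp only [Finsupp.add_apply, sMul_coeff, Finsupp.add_apply]
  rw [← Finset.sum_add_distrib]
  apply Finset.sum_congr rfl
  intro i _
  split_ifs
  · rw [map_add, mul_add]
  · simp

lemma add_sMul (q r f : ℕ →₀ M) : sMul θ (q + r) f = sMul θ q f + sMul θ r f := by
  ext k
  have hsub : (q + r).support ⊆ q.support ∪ r.support := Finsupp.support_add
  rw [Finsupp.add_apply,
    sMul_coeff' θ (q+r) f k (q.support ∪ r.support) hsub,
    sMul_coeff' θ q f k (q.support ∪ r.support) Finset.subset_union_left,
    sMul_coeff' θ r f k (q.support ∪ r.support) Finset.subset_union_right,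
    ← Finset.sum_add_distrib]
  apply Finset.sum_congr rfl
  intro i _
  split_ifs
  · rw [Finsupp.add_apply, add_mul]
  · simp

lemma const_sMul_apply (c : M) (f : ℕ →₀ M) (k : ℕ) :
    sMul θ (Finsupp.single 0 c) f k = c * f k := by
  rw [single_sMul_apply, if_pos (Nat.zero_le k), Nat.sub_zero, pow_zero]
  rfl

lemma one_sMul (f : ℕ →₀ M) : sMul θ (Finsupp.single 0 1) f = f := by
  ext k; rw [const_sMul_apply, one_mul]

lemma single_sMul_single (i j : ℕ) (a b : M) :
    sMul θ (Finsupp.single i a) (Finsupp.single j b) = Finsupp.single (i+j) (a * (θ^i) b) := by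
  rw [single_sMul]
  apply Finsupp.sum_single_index
  simp

lemma sMul_assoc (a b c : ℕ →₀ M) : sMul θ (sMul θ a b) c = sMul θ a (sMul θ b c) := by
  induction a using Finsupp.induction with
  | zero => simp [zero_sMul]
  | single_add i x a' _ _ ih =>
    rw [add_sMul, add_sMul, add_sMul, ih]
    congr 1
    clear ih
    induction b using Finsupp.induction with
    | zero => simp [zero_sMul, sMul_zero]
    | single_add j y b' _ _ ihb =>
      rw [sMul_add, add_sMul, add_sMul, sMul_add, ihb]
      congr 1
      rw [single_sMul_single]
      ext k
      rw [single_sMul_apply, single_sMul_apply, single_sMul_apply]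
      by_cases h1 : i + j ≤ k
      · rw [if_pos h1, if_pos (by omega : i ≤ k), if_pos (by omega : j ≤ k - i)]
        have h3 : k - i - j = k - (i + j) := by omega
        rw [h3, map_mul, pow_apply_apply, ← mul_assoc]
      · rw [if_neg h1]
        by_cases h2 : i ≤ k
        · rw [if_pos h2, if_neg (by omega : ¬ j ≤ k - i)]
          simp
        · rw [if_neg h2]

noncomputable def deg (f : ℕ →₀ M) : ℕ :=
  if h : f.support.Nonempty then f.support.max' h else 0

lemma deg_coeff_ne_zero {f : ℕ →₀ M} (hf : f ≠ 0) : f (deg f) ≠ 0 := by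
  have h : f.support.Nonempty := Finsupp.support_nonempty_iff.mpr hf
  rw [deg, dif_pos h]
  exact Finsupp.mem_support_iff.mp (f.support.max'_mem h)

lemma coeff_eq_zero_of_deg_lt {f : ℕ →₀ M} {j : ℕ} (hj : deg f < j) : f j = 0 := by
  by_cases h : f.support.Nonempty
  · rw [deg, dif_pos h] at hj
    by_contra hne
    exact absurd (Finset.le_max' _ j (Finsupp.mem_support_iff.mpr hne)) (by omega)
  · rw [Finset.not_nonempty_iff_eq_empty] at h
    have : f = 0 := Finsupp.support_eq_empty.mp h
    simp [this]

lemma le_deg_of_mem_support {f : ℕ →₀ M} {i : ℕ} (hi : i ∈ f.support) : i ≤ deg f := by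
  have h : f.support.Nonempty := ⟨i, hi⟩
  rw [deg, dif_pos h]
  exact Finset.le_max' _ i hi

lemma deg_eq_of {f : ℕ →₀ M} {d : ℕ} (h1 : f d ≠ 0) (h2 : ∀ j, d < j → f j = 0) :
    deg f = d := by
  have hmem : d ∈ f.support := Finsupp.mem_support_iff.mpr h1
  have h3 := le_deg_of_mem_support hmem
  by_contra hne
  rcases lt_or_gt_of_ne hne with h | h
  · omega
  · have hfne : f ≠ 0 := fun h0 => h1 (by simp [h0])
    exact absurd (h2 _ h) (deg_coeff_ne_zero hfne)

lemma sMul_coeff_gt (q f : ℕ →₀ M) (j : ℕ) (hj : deg q + deg f < j) : sMul θ q f j = 0 := by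
  rw [sMul_coeff]
  apply Finset.sum_eq_zero
  intro i hi
  have h1 : i ≤ deg q := le_deg_of_mem_support hi
  split_ifs with h
  · rw [coeff_eq_zero_of_deg_lt (by omega : deg f < j - i)]
    simp
  · rfl

lemma sMul_coeff_top (q f : ℕ →₀ M) (hq : q ≠ 0) :
    sMul θ q f (deg q + deg f) = q (deg q) * (θ ^ (deg q)) (f (deg f)) := by
  rw [sMul_coeff]
  rw [Finset.sum_eq_single (deg q)]
  · rw [if_pos (by omega), Nat.add_sub_cancel_left]
  · intro i hi hne
    have h1 : i ≤ deg q := le_deg_of_mem_support hi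
    rw [if_pos (by omega), coeff_eq_zero_of_deg_lt (by omega : deg f < deg q + deg f - i)]
    simp
  · intro h
    exact absurd (Finsupp.mem_support_iff.mpr (deg_coeff_ne_zero hq)) h

lemma ringEquiv_ne_zero (φ : M ≃+* M) {x : M} (hx : x ≠ 0) : φ x ≠ 0 := by
  intro h
  exact hx (by simpa using φ.injective (h.trans (map_zero φ).symm))

lemma sMul_ne_zero {q f : ℕ →₀ M} (hq : q ≠ 0) (hf : f ≠ 0) : sMul θ q f ≠ 0 := by
  intro h
  have := sMul_coeff_top θ q f hq
  rw [h] at this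
  exact mul_ne_zero (deg_coeff_ne_zero hq)
    (ringEquiv_ne_zero (θ ^ deg q) (deg_coeff_ne_zero hf)) (by simpa using this.symm)

lemma deg_sMul {q f : ℕ →₀ M} (hq : q ≠ 0) (hf : f ≠ 0) :
    deg (sMul θ q f) = deg q + deg f := by
  apply deg_eq_of
  · rw [sMul_coeff_top θ q f hq]
    exact mul_ne_zero (deg_coeff_ne_zero hq) (ringEquiv_ne_zero _ (deg_coeff_ne_zero hf))
  · intro j hj
    exact sMul_coeff_gt θ q f j hj


lemma monicAt_ne_zero {f : ℕ →₀ M} {d : ℕ} (h : IsMonicAt f d) : f ≠ 0 := by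
  intro h0
  have := h.1
  rw [h0] at this
  simp at this

lemma monicAt_deg {f : ℕ →₀ M} {d : ℕ} (h : IsMonicAt f d) : deg f = d :=
  deg_eq_of (by rw [h.1]; exact one_ne_zero) h.2

lemma eq_single_of_deg_zero {q : ℕ →₀ M} (h : deg q = 0) : q = Finsupp.single 0 (q 0) := by
  ext k
  rcases Nat.eq_zero_or_pos k with rfl | hk
  · simp
  · rw [coeff_eq_zero_of_deg_lt (by omega), Finsupp.single_apply, if_neg (by omega)]

lemma monic_unique {g h : ℕ →₀ M} {d : ℕ} (hg : IsMonicAt g d) (hh : IsMonicAt h d)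
    (hmem : h ∈ lIdeal θ g) : h = g := by
  obtain ⟨q, hq⟩ := hmem
  have hgne : g ≠ 0 := monicAt_ne_zero hg
  have hhne : h ≠ 0 := monicAt_ne_zero hh
  have hqne : q ≠ 0 := by rintro rfl; rw [zero_sMul] at hq; exact hhne hq
  have hdeg : deg h = deg q + deg g := by rw [hq]; exact deg_sMul θ hqne hgne
  rw [monicAt_deg hg, monicAt_deg hh] at hdeg
  have hq0 : deg q = 0 := by omega
  have hq1 : q = Finsupp.single 0 (q 0) := eq_single_of_deg_zero hq0
  have hco : ∀ k, h k = q 0 * g k := by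
    intro k
    rw [hq, hq1, const_sMul_apply]
    simp
  have : q 0 = 1 := by
    have := hco d
    rw [hh.1, hg.1, mul_one] at this
    exact this.symm
  ext k
  rw [hco k, this, one_mul]

lemma div_algo {g : ℕ →₀ M} {d : ℕ} (hg : IsMonicAt g d) :
    ∀ N : ℕ, ∀ h : ℕ →₀ M, (∀ j, N ≤ j → h j = 0) →
      ∃ q, ∀ j, d ≤ j → (h - sMul θ q g) j = 0 := by
  intro N
  induction N with
  | zero =>
    intro h hh
    refine ⟨0, fun j _ => ?_⟩
    rw [zero_sMul, sub_zero]
    exact hh j (Nat.zero_le j)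
  | succ N ih =>
    intro h hh
    by_cases hNd : N < d
    · refine ⟨0, fun j hj => ?_⟩
      rw [zero_sMul, sub_zero]
      exact hh j (by omega)
    · push_neg at hNd
      set h' := h - sMul θ (Finsupp.single (N - d) (h N)) g with hh'
      have hbound : ∀ j, N ≤ j → h' j = 0 := by
        intro j hj
        rw [hh', Finsupp.sub_apply, single_sMul_apply, if_pos (by omega : N - d ≤ j)]
        rcases Nat.lt_or_ge N j with hlt | hge
        · rw [hh j (by omega), hg.2 (j - (N - d)) (by omega)]
          simp
        · have hjN : j = N := by omega
          subst hjN
          have : j - (j - d) = d := by omega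
          rw [this, hg.1, map_one, mul_one, sub_self]
      obtain ⟨q', hq'⟩ := ih h' hbound
      refine ⟨Finsupp.single (N - d) (h N) + q', fun j hj => ?_⟩
      have h2 := hq' j hj
      rw [hh', Finsupp.sub_apply, Finsupp.sub_apply] at h2
      rw [add_sMul, Finsupp.sub_apply, Finsupp.add_apply]
      linear_combination h2

lemma pmap_applyc (φ : M ≃+* M) (f : ℕ →₀ M) (k : ℕ) : pmap φ f k = φ (f k) :=
  Finsupp.mapRange_apply

lemma pmap_sMul (φ : M ≃+* M) (hcomm : ∀ (i : ℕ) (x : M), φ ((θ^i) x) = (θ^i) (φ x))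
    (q f : ℕ →₀ M) : pmap φ (sMul θ q f) = sMul θ (pmap φ q) (pmap φ f) := by
  ext k
  rw [pmap_applyc]
  rw [sMul_coeff θ q f k]
  rw [sMul_coeff' θ (pmap φ q) (pmap φ f) k q.support Finsupp.support_mapRange]
  rw [map_sum]
  apply Finset.sum_congr rfl
  intro i _
  rw [apply_ite φ, map_zero, map_mul, pmap_applyc, pmap_applyc, hcomm]

lemma pmap_pmap_symm (φ : M ≃+* M) (f : ℕ →₀ M) : pmap φ (pmap φ.symm f) = f := by
  ext k
  rw [pmap_applyc, pmap_applyc, RingEquiv.apply_symm_apply]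

lemma pmap_symm_pmap (φ : M ≃+* M) (f : ℕ →₀ M) : pmap φ.symm (pmap φ f) = f := by
  ext k
  rw [pmap_applyc, pmap_applyc, RingEquiv.symm_apply_apply]

lemma symm_comm (φ : M ≃+* M) (hcomm : ∀ (i : ℕ) (x : M), φ ((θ^i) x) = (θ^i) (φ x)) :
    ∀ (i : ℕ) (x : M), φ.symm ((θ^i) x) = (θ^i) (φ.symm x) := by
  intro i x
  have h := hcomm i (φ.symm x)
  rw [RingEquiv.apply_symm_apply] at h
  rw [← h, RingEquiv.symm_apply_apply]

lemma pmap_image_lIdeal (φ : M ≃+* M) (hcomm : ∀ (i : ℕ) (x : M), φ ((θ^i) x) = (θ^i) (φ x))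
    (g : ℕ →₀ M) : pmap φ '' lIdeal θ g = lIdeal θ (pmap φ g) := by
  ext h
  constructor
  · rintro ⟨h', ⟨q, rfl⟩, rfl⟩
    exact ⟨pmap φ q, pmap_sMul θ φ hcomm q g⟩
  · rintro ⟨q, rfl⟩
    refine ⟨sMul θ (pmap φ.symm q) g, ⟨_, rfl⟩, ?_⟩
    rw [pmap_sMul θ φ hcomm, pmap_pmap_symm]

-- ideal membership lemmas
lemma zero_mem_lIdeal (f : ℕ →₀ M) : (0 : ℕ →₀ M) ∈ lIdeal θ f := ⟨0, (zero_sMul θ f).symm⟩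

lemma add_mem_lIdeal {f a b : ℕ →₀ M} (ha : a ∈ lIdeal θ f) (hb : b ∈ lIdeal θ f) :
    a + b ∈ lIdeal θ f := by
  obtain ⟨q, rfl⟩ := ha; obtain ⟨r, rfl⟩ := hb
  exact ⟨q + r, (add_sMul θ q r f).symm⟩

lemma sMul_mem_lIdeal {f h : ℕ →₀ M} (q : ℕ →₀ M) (hh : h ∈ lIdeal θ f) :
    sMul θ q h ∈ lIdeal θ f := by
  obtain ⟨r, rfl⟩ := hh
  exact ⟨sMul θ q r, (sMul_assoc θ q r f).symm⟩

lemma lIdeal_subset {f g : ℕ →₀ M} (hg : g ∈ lIdeal θ f) : lIdeal θ g ⊆ lIdeal θ f := by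
  rintro h ⟨q, rfl⟩
  exact sMul_mem_lIdeal θ q hg

lemma self_mem_lIdeal (f : ℕ →₀ M) : f ∈ lIdeal θ f := ⟨Finsupp.single 0 1, (one_sMul θ f).symm⟩

lemma sub_mem_lIdeal {f a b : ℕ →₀ M} (ha : a ∈ lIdeal θ f) (hb : b ∈ lIdeal θ f) :
    a - b ∈ lIdeal θ f := by
  have hneg : -b ∈ lIdeal θ f := by
    have h1 := sMul_mem_lIdeal θ (Finsupp.single 0 (-1)) hb
    have h2 : sMul θ (Finsupp.single 0 (-1)) b = -b := by
      ext k
      rw [const_sMul_apply]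
      simp
    rwa [h2] at h1
  have := add_mem_lIdeal θ ha hneg
  rwa [← sub_eq_add_neg] at this


lemma neg_mem_J {J : Set (ℕ →₀ M)} (hJ : IsLeftIdeal θ J) {b : ℕ →₀ M} (hb : b ∈ J) :
    -b ∈ J := by
  have h1 := hJ.2.2 (Finsupp.single 0 (-1)) b hb
  have h2 : sMul θ (Finsupp.single 0 (-1)) b = -b := by
    ext k
    rw [const_sMul_apply]
    simp
  rwa [h2] at h1

lemma sub_mem_J {J : Set (ℕ →₀ M)} (hJ : IsLeftIdeal θ J) {a b : ℕ →₀ M}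
    (ha : a ∈ J) (hb : b ∈ J) : a - b ∈ J := by
  have := hJ.2.1 a ha (-b) (neg_mem_J θ hJ hb)
  rwa [← sub_eq_add_neg] at this

lemma leftIdeal_principal {J : Set (ℕ →₀ M)} (hJ : IsLeftIdeal θ J)
    (hne : ∃ h ∈ J, h ≠ 0) :
    ∃ g d, IsMonicAt g d ∧ g ∈ J ∧ J = lIdeal θ g := by
  classical
  set P : ℕ → Prop := fun m => ∃ h ∈ J, h ≠ 0 ∧ deg h = m with hP
  have hPex : ∃ m, P m := by
    obtain ⟨h, hh, hne0⟩ := hne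
    exact ⟨deg h, h, hh, hne0, rfl⟩
  obtain ⟨h₀, hh₀J, hh₀ne, hh₀d⟩ := Nat.find_spec hPex
  set d := Nat.find hPex with hd
  have hmin : ∀ m, m < d → ¬ P m := fun m hm => Nat.find_min hPex hm
  set c := (h₀ (deg h₀))⁻¹ with hc
  set g := sMul θ (Finsupp.single 0 c) h₀ with hg
  have hgJ : g ∈ J := hJ.2.2 _ _ hh₀J
  have hgk : ∀ k, g k = c * h₀ k := fun k => const_sMul_apply θ c h₀ k
  have hlead : h₀ (deg h₀) ≠ 0 := deg_coeff_ne_zero hh₀ne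
  have hgmon : IsMonicAt g d := by
    constructor
    · rw [hgk, ← hh₀d, hc, inv_mul_cancel₀ hlead]
    · intro j hj
      rw [hgk, coeff_eq_zero_of_deg_lt (by omega : deg h₀ < j), mul_zero]
  refine ⟨g, d, hgmon, hgJ, ?_⟩
  apply Set.eq_of_subset_of_subset
  · intro h hhJ
    have hbnd : ∀ j, deg h + 1 ≤ j → h j = 0 := fun j hj =>
      coeff_eq_zero_of_deg_lt (by omega)
    obtain ⟨q, hq⟩ := div_algo θ hgmon (deg h + 1) h hbnd
    have hrJ : h - sMul θ q g ∈ J := sub_mem_J θ hJ hhJ (hJ.2.2 q g hgJ)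
    have hr0 : h - sMul θ q g = 0 := by
      by_contra hrne
      have hdr : deg (h - sMul θ q g) < d := by
        have := deg_coeff_ne_zero hrne
        by_contra hge
        push_neg at hge
        exact this (hq _ hge)
      exact hmin _ hdr ⟨_, hrJ, hrne, rfl⟩
    refine ⟨q, ?_⟩
    have := sub_eq_zero.mp hr0
    exact this
  · rintro h ⟨q, rfl⟩
    exact hJ.2.2 q g hgJ

lemma pmap_one_eq (f : ℕ →₀ M) : pmap (1 : M ≃+* M) f = f := by
  ext k
  rw [pmap_applyc]
  rfl

lemma pmap_pmap (φ ψ : M ≃+* M) (f : ℕ →₀ M) : pmap φ (pmap ψ f) = pmap (φ * ψ) f := by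
  ext k
  rw [pmap_applyc, pmap_applyc, pmap_applyc]
  rfl

lemma inR_fix {φ : M ≃+* M} {f : ℕ →₀ M} (h : inR φ f) : pmap φ f = f := by
  ext k
  rw [pmap_applyc]
  exact h k

lemma inR_pow_fix {φ : M ≃+* M} {f : ℕ →₀ M} (h : inR φ f) (i : ℕ) : pmap (φ ^ i) f = f := by
  induction i with
  | zero =>
    rw [pow_zero]
    exact pmap_one_eq f
  | succ i ih =>
    rw [pow_succ, ← pmap_pmap, inR_fix h, ih]

lemma inR_symm_fix {φ : M ≃+* M} {f : ℕ →₀ M} (h : inR φ f) : pmap φ.symm f = f := by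
  ext k
  rw [pmap_applyc]
  have := h k
  calc φ.symm (f k) = φ.symm (φ (f k)) := by rw [this]
  _ = f k := RingEquiv.symm_apply_apply φ (f k)

lemma pmap_bijective (φ : M ≃+* M) : Function.Bijective (pmap φ : (ℕ →₀ M) → (ℕ →₀ M)) := by
  constructor
  · intro a b hab
    have := congrArg (pmap φ.symm) hab
    rwa [pmap_symm_pmap, pmap_symm_pmap] at this
  · intro b
    exact ⟨pmap φ.symm b, pmap_pmap_symm φ b⟩

lemma hcomm_pow (m : ℕ) : ∀ (i : ℕ) (x : M), (θ^m) ((θ^i) x) = (θ^i) ((θ^m) x) := by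
  intro i x
  rw [pow_apply_apply, pow_apply_apply, Nat.add_comm]

lemma hcomm_pow_pow (m j : ℕ) :
    ∀ (i : ℕ) (x : M), ((θ^m)^j) ((θ^i) x) = (θ^i) (((θ^m)^j) x) := by
  intro i x
  rw [← pow_mul]
  exact hcomm_pow θ (m*j) i x

lemma deg_le_of_mem {g h : ℕ →₀ M} (hmem : h ∈ lIdeal θ g) (hh : h ≠ 0) (hg : g ≠ 0) :
    deg g ≤ deg h := by
  obtain ⟨q, rfl⟩ := hmem
  have hq : q ≠ 0 := by rintro rfl; rw [zero_sMul] at hh; exact hh rfl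
  rw [deg_sMul θ hq hg]
  omega

lemma maximality (μ : ℕ) (f fbar : ℕ →₀ M)
    (hfbargen : {h | ∃ q, inR (θ ^ μ) q ∧ h = sMul θ q fbar}
      = lIdeal θ f ∩ {h | inR (θ ^ μ) h})
    (J : Set (ℕ →₀ M)) (hJI : IsLeftIdeal θ J) (hJinv : pmap (θ^μ) '' J = J)
    (hJf : J ⊆ lIdeal θ f) : J ⊆ lIdeal θ fbar := by
  by_cases hz : ∃ h ∈ J, h ≠ 0
  · obtain ⟨g, d, hgmon, hgJ, hJg⟩ := leftIdeal_principal θ hJI hz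
    have hπg : pmap (θ^μ) g ∈ J := by
      rw [← hJinv]
      exact ⟨g, hgJ, rfl⟩
    have hπmon : IsMonicAt (pmap (θ^μ) g) d :=
      ⟨by rw [pmap_applyc, hgmon.1, map_one],
       fun j hj => by rw [pmap_applyc, hgmon.2 j hj, map_zero]⟩
    have hfix : pmap (θ^μ) g = g := monic_unique θ hgmon hπmon (hJg ▸ hπg)
    have hginR : inR (θ^μ) g := by
      intro j
      have := DFunLike.congr_fun hfix j
      rwa [pmap_applyc] at this
    have hgmem : g ∈ lIdeal θ f ∩ {h | inR (θ^μ) h} := ⟨hJf hgJ, hginR⟩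
    rw [← hfbargen] at hgmem
    obtain ⟨q, _, hgq⟩ := hgmem
    have hgfbar : g ∈ lIdeal θ fbar := ⟨q, hgq⟩
    rw [hJg]
    exact lIdeal_subset θ hgfbar
  · push_neg at hz
    intro h hh
    rw [hz h hh]
    exact zero_mem_lIdeal θ fbar

end Helper

/-- Setting: `θ` of order `n = μ·s`, `π = θ^μ` extended coefficientwise to
`S = M[x;θ]` with fixed ring `R = L[x;σ]`. For `0 ≠ f ∈ S`, let `f̄` be the monic generator of
the left ideal `S·f ∩ R` of `R`. Then: (i) `S·f̄` is the largest `π`-invariant left ideal of `S`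
contained in `S·f`; (ii) `S·f̄ = ⋂_{i=0}^{s-1} S·f^{πⁱ}`; and consequently (iii)
`f̄ = lclm(f, f^π, …, f^{π^{s-1}})`, i.e. `f̄` is the unique monic polynomial generating
`⋂_{i=0}^{s-1} S·f^{πⁱ}`. -/
theorem pseudo_bound_lclm {M : Type*} [Field M] (θ : M ≃+* M) (μ s n : ℕ)
    (hμ : 0 < μ) (hs : 0 < s) (hn : n = μ * s) (hord : orderOf θ = n)
    (f : ℕ →₀ M) (hf : f ≠ 0)
    (fbar : ℕ →₀ M) (hfbarR : inR (θ ^ μ) fbar) (hfbarM : IsMonic fbar)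
    (hfbargen : {h | ∃ q, inR (θ ^ μ) q ∧ h = sMul θ q fbar}
      = lIdeal θ f ∩ {h | inR (θ ^ μ) h}) :
    (pmap (θ ^ μ) '' lIdeal θ fbar = lIdeal θ fbar ∧
      lIdeal θ fbar ⊆ lIdeal θ f ∧
      ∀ J : Set (ℕ →₀ M), IsLeftIdeal θ J → pmap (θ ^ μ) '' J = J →
        J ⊆ lIdeal θ f → J ⊆ lIdeal θ fbar) ∧
    (lIdeal θ fbar = ⋂ i ∈ Finset.range s, lIdeal θ (pmap ((θ ^ μ) ^ i) f)) ∧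
    (∀ h : ℕ →₀ M, IsMonic h →
      lIdeal θ h = ⋂ i ∈ Finset.range s, lIdeal θ (pmap ((θ ^ μ) ^ i) f) → h = fbar) := by
  classical
  have hcomm : ∀ (i : ℕ) (x : M), (θ^μ) ((θ^i) x) = (θ^i) ((θ^μ) x) := hcomm_pow θ μ
  have himg1 : ∀ g : ℕ →₀ M, pmap (θ^μ) '' lIdeal θ g = lIdeal θ (pmap (θ^μ) g) :=
    pmap_image_lIdeal θ (θ^μ) hcomm
  have himg : ∀ (j : ℕ) (g : ℕ →₀ M),
      pmap ((θ^μ)^j) '' lIdeal θ g = lIdeal θ (pmap ((θ^μ)^j) g) :=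
    fun j g => pmap_image_lIdeal θ ((θ^μ)^j) (hcomm_pow_pow θ μ j) g
  have hfbarfix : pmap (θ^μ) fbar = fbar := inR_fix hfbarR
  have hsingleR : inR (θ^μ) (Finsupp.single 0 1 : ℕ →₀ M) := by
    intro j
    rw [Finsupp.single_apply]
    split_ifs
    · exact map_one _
    · exact map_zero _
  have hfbar_f : fbar ∈ lIdeal θ f := by
    have hmem : fbar ∈ {h | ∃ q, inR (θ^μ) q ∧ h = sMul θ q fbar} :=
      ⟨Finsupp.single 0 1, hsingleR, (one_sMul θ fbar).symm⟩
    rw [hfbargen] at hmem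
    exact hmem.1
  have hpis : ((θ^μ) : M ≃+* M)^s = 1 := by
    rw [← pow_mul, ← hn, ← hord]
    exact pow_orderOf_eq_one θ
  have hBs : pmap ((θ^μ)^s) f = f := by rw [hpis]; exact pmap_one_eq f
  have hB0 : pmap ((θ^μ)^0) f = f := by rw [pow_zero]; exact pmap_one_eq f
  set J : Set (ℕ →₀ M) := ⋂ i ∈ Finset.range s, lIdeal θ (pmap ((θ^μ)^i) f) with hJdef
  have hmemJ : ∀ h : ℕ →₀ M, h ∈ J ↔ ∀ i, i < s → h ∈ lIdeal θ (pmap ((θ^μ)^i) f) := by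
    intro h
    simp [hJdef, Set.mem_iInter, Finset.mem_range]
  have hJideal : IsLeftIdeal θ J := by
    refine ⟨?_, ?_, ?_⟩
    · rw [hmemJ]
      intro i _
      exact zero_mem_lIdeal θ _
    · intro a ha b hb
      rw [hmemJ] at ha hb ⊢
      intro i hi
      exact add_mem_lIdeal θ (ha i hi) (hb i hi)
    · intro q h hh
      rw [hmemJ] at hh ⊢
      intro i hi
      exact sMul_mem_lIdeal θ q (hh i hi)
  have hkey : ∀ i : ℕ, pmap (θ^μ) (pmap ((θ^μ)^i) f) = pmap ((θ^μ)^(i+1)) f := by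
    intro i
    rw [pmap_pmap]
    congr 1
    exact (pow_succ' _ i).symm
  have hJinv : pmap (θ^μ) '' J = J := by
    have himage : pmap (θ^μ) '' J
        = ⋂ i ∈ Finset.range s, pmap (θ^μ) '' lIdeal θ (pmap ((θ^μ)^i) f) := by
      rw [hJdef]
      exact Set.image_iInter₂ (pmap_bijective (θ^μ)) _
    rw [himage]
    have hstep : (⋂ i ∈ Finset.range s, pmap (θ^μ) '' lIdeal θ (pmap ((θ^μ)^i) f))
        = ⋂ i ∈ Finset.range s, lIdeal θ (pmap ((θ^μ)^(i+1)) f) := by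
      apply Set.iInter₂_congr
      intro i _
      rw [himg1, hkey]
    rw [hstep]
    ext h
    simp only [Set.mem_iInter, Finset.mem_range, hJdef]
    constructor
    · intro h1 i hi
      cases i with
      | zero =>
        have h2 := h1 (s-1) (by omega)
        rw [Nat.sub_add_cancel hs, hBs] at h2
        rwa [hB0]
      | succ j =>
        exact h1 j (by omega)
    · intro h1 i hi
      by_cases h2 : i + 1 < s
      · exact h1 (i+1) h2
      · have h3 : i + 1 = s := by omega
        rw [h3, hBs]
        have h4 := h1 0 hs
        rwa [hB0] at h4
  have hJf : J ⊆ lIdeal θ f := by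
    intro h hh
    rw [hmemJ] at hh
    have := hh 0 hs
    rwa [hB0] at this
  have hJfbar : J ⊆ lIdeal θ fbar :=
    maximality θ μ f fbar hfbargen J hJideal hJinv hJf
  have hfbarJ : lIdeal θ fbar ⊆ J := by
    intro h hh
    rw [hmemJ]
    intro i hi
    have h1 : fbar ∈ lIdeal θ (pmap ((θ^μ)^i) f) := by
      rw [← himg i f]
      exact ⟨fbar, hfbar_f, inR_pow_fix hfbarR i⟩
    exact lIdeal_subset θ h1 hh
  have hii : lIdeal θ fbar = J := Set.eq_of_subset_of_subset hfbarJ hJfbar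
  refine ⟨⟨?_, ?_, ?_⟩, hii, ?_⟩
  · rw [himg1, hfbarfix]
  · exact lIdeal_subset θ hfbar_f
  · exact fun J' h1 h2 h3 => maximality θ μ f fbar hfbargen J' h1 h2 h3
  · intro h hmon heq
    have hhfbar : lIdeal θ h = lIdeal θ fbar := by rw [heq, ← hii]
    obtain ⟨e, hhe⟩ := hmon
    obtain ⟨d2, hfd⟩ := hfbarM
    have h1 : h ∈ lIdeal θ fbar := by
      rw [← hhfbar]
      exact self_mem_lIdeal θ h
    have h2 : fbar ∈ lIdeal θ h := by
      rw [hhfbar]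
      exact self_mem_lIdeal θ fbar
    have hhne := monicAt_ne_zero hhe
    have hfne := monicAt_ne_zero hfd
    have e1 := deg_le_of_mem θ h1 hhne hfne
    have e2 := deg_le_of_mem θ h2 hfne hhne
    have hdeq : deg h = deg fbar := le_antisymm e2 e1
    rw [monicAt_deg hhe, monicAt_deg hfd] at hdeq
    exact monic_unique θ (hdeq ▸ hfd) hhe h1
end
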